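/- arXiv:2309.12236 — 3 statements merged into one kernel-verified Lean document; each statement's English description precedes it below -/
import Mathlib

section
/- Let D be a perfectly calibrated probability distribution over [0,1]×{0,1}, i.e. E_D[y | f] = f almost surely. Then for any non-negative kernel K on U×U with U ⊇ [0,1], smECE_K(D) = 0. -/
open MeasureTheory Real Set
open scoped ENNReal

noncomputable section

/-- Gaussian probability density of `N(0, σ²)`. -/
def gaussPdf (σ t : ℝ) : ℝ :=
  Real.exp (-(t ^ 2) / (2 * σ ^ 2)) / Real.sqrt (2 * Real.pi * σ ^ 2)

/-- The reflection map `π_R : ℝ → [0,1]`: `π_R(x) = x mod 2` if `x mod 2 ≤ 1`,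
and `2 - (x mod 2)` otherwise. -/
def piR (x : ℝ) : ℝ :=
  if 2 * Int.fract (x / 2) ≤ 1 then 2 * Int.fract (x / 2) else 2 - 2 * Int.fract (x / 2)

/-- The reflected Gaussian kernel on `[0,1]` with scale `σ`:
`K̃_σ(x,y) = ∑_{x̃ ∈ π_R⁻¹(x)} φ_σ(x̃ - y)`. -/
def reflGauss (σ x y : ℝ) : ℝ :=
  ∑' z : (piR ⁻¹' {x}), gaussPdf σ ((z : ℝ) - y)

/-- `D` is a distribution of prediction-outcome pairs over `[0,1] × {0,1}`. -/
def SupportedOn (D : Measure (ℝ × ℝ)) : Prop :=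
  ∀ᵐ p ∂D, p.1 ∈ Icc (0 : ℝ) 1 ∧ (p.2 = 0 ∨ p.2 = 1)

/-- The smooth ECE for a general kernel `K` on an interval `U ⊇ [0,1]`:
`smECE_K(D) = ∫_U |E_{(f,y)∼D}[K(t,f)(y−f)]| dt`. -/
def smECEK (U : Set ℝ) (K : ℝ → ℝ → ℝ) (D : Measure (ℝ × ℝ)) : ℝ :=
  ∫ t in U, |∫ p, K t p.1 * (p.2 - p.1) ∂D|

/-- `D` is perfectly calibrated: `E[y - f | f] = 0`, expressed via indicator test sets. -/
def PerfectlyCalibrated (D : Measure (ℝ × ℝ)) : Prop :=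
  IsProbabilityMeasure D ∧ SupportedOn D ∧
    ∀ s : Set ℝ, MeasurableSet s → ∫ p in Prod.fst ⁻¹' s, (p.2 - p.1) ∂D = 0

/-- The key pointwise fact: for a perfectly calibrated `D` and nonnegative `g`,
the integral `∫ g(f) (y - f) dD` vanishes. -/
lemma inner_integral_eq_zero (D : Measure (ℝ × ℝ)) (hD : PerfectlyCalibrated D)
    (g : ℝ → ℝ) (hg : ∀ x, 0 ≤ g x) :
    ∫ p, g p.1 * (p.2 - p.1) ∂D = 0 := by
  obtain ⟨hprob, hsupp, hcal⟩ := hD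
  set h : ℝ × ℝ → ℝ := fun p => g p.1 * (p.2 - p.1) with hh
  by_cases hint : Integrable h D
  · -- weight functions
    set wp : ℝ × ℝ → ℝ≥0∞ := fun p => ENNReal.ofReal (p.2 - p.1) with hwp
    set wm : ℝ × ℝ → ℝ≥0∞ := fun p => ENNReal.ofReal (p.1 - p.2) with hwm
    have hwp_meas : Measurable wp := by
      exact (measurable_snd.sub measurable_fst).ennreal_ofReal
    have hwm_meas : Measurable wm := by
      exact (measurable_fst.sub measurable_snd).ennreal_ofReal
    set G : ℝ → ℝ≥0∞ := fun x => ENNReal.ofReal (g x) with hG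
    -- pointwise positive/negative parts of h
    have hFp : ∀ p, ENNReal.ofReal (h p) = G p.1 * wp p := fun p =>
      ENNReal.ofReal_mul (hg p.1)
    have hFm : ∀ p, ENNReal.ofReal (-h p) = G p.1 * wm p := by
      intro p
      have : -h p = g p.1 * (p.1 - p.2) := by simp [hh]; ring
      rw [this]; exact ENNReal.ofReal_mul (hg p.1)
    set νp : Measure (ℝ × ℝ) := D.withDensity wp with hνp
    set νm : Measure (ℝ × ℝ) := D.withDensity wm with hνm
    have hwp_fin : ∀ᵐ p ∂D, wp p < ∞ := ae_of_all _ fun p => ENNReal.ofReal_lt_top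
    have hwm_fin : ∀ᵐ p ∂D, wm p < ∞ := ae_of_all _ fun p => ENNReal.ofReal_lt_top
    -- the two pushforwards agree
    have hbd1 : ∀ᵐ p ∂D, wp p ≤ 1 := by
      filter_upwards [hsupp] with p hp
      rcases hp with ⟨⟨hf0, hf1⟩, hy⟩
      rcases hy with hy | hy <;>
        · rw [hwp]; simp only [hy]
          refine ENNReal.ofReal_le_one.2 (by linarith)
    have hmapeq : νp.map Prod.fst = νm.map Prod.fst := by
      ext s hs
      rw [Measure.map_apply measurable_fst hs, Measure.map_apply measurable_fst hs,
        hνp, hνm, withDensity_apply _ (measurable_fst hs),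
        withDensity_apply _ (measurable_fst hs)]
      have hint' : Integrable (fun p : ℝ × ℝ => p.2 - p.1) (D.restrict (Prod.fst ⁻¹' s)) :=
        by
        have : Integrable (fun p : ℝ × ℝ => p.2 - p.1) D := by
          refine Integrable.mono' (integrable_const (1 : ℝ))
            ((measurable_snd.sub measurable_fst).aestronglyMeasurable) ?_
          filter_upwards [hsupp] with p hp
          rcases hp with ⟨⟨hf0, hf1⟩, hy⟩
          rcases hy with hy | hy <;> · rw [Real.norm_eq_abs, abs_le]; constructor <;> simp [hy] <;> linarith
        exact this.restrict
      have h0 := hcal s hs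
      rw [integral_eq_lintegral_pos_part_sub_lintegral_neg_part hint'] at h0
      have hfin1 : (∫⁻ p in Prod.fst ⁻¹' s, ENNReal.ofReal (p.2 - p.1) ∂D) < ∞ := by
        calc (∫⁻ p in Prod.fst ⁻¹' s, ENNReal.ofReal (p.2 - p.1) ∂D)
            ≤ ∫⁻ _ in Prod.fst ⁻¹' s, 1 ∂D := by
              refine lintegral_mono_ae ?_
              exact ae_restrict_of_ae hbd1
          _ = D (Prod.fst ⁻¹' s) := setLIntegral_one _
          _ ≤ 1 := prob_le_one
          _ < ∞ := by norm_num
      have hfin2 : (∫⁻ p in Prod.fst ⁻¹' s, ENNReal.ofReal (p.1 - p.2) ∂D) < ∞ := by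
        calc (∫⁻ p in Prod.fst ⁻¹' s, ENNReal.ofReal (p.1 - p.2) ∂D)
            ≤ ∫⁻ _ in Prod.fst ⁻¹' s, 1 ∂D := by
              refine lintegral_mono_ae (ae_restrict_of_ae ?_)
              filter_upwards [hsupp] with p hp
              rcases hp with ⟨⟨hf0, hf1⟩, hy⟩
              rcases hy with hy | hy <;>
                · simp only [hy]; exact ENNReal.ofReal_le_one.2 (by linarith)
          _ = D (Prod.fst ⁻¹' s) := setLIntegral_one _
          _ ≤ 1 := prob_le_one
          _ < ∞ := by norm_num
      have := sub_eq_zero.1 h0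
      have heq : (∫⁻ p in Prod.fst ⁻¹' s, ENNReal.ofReal (p.2 - p.1) ∂D)
          = ∫⁻ p in Prod.fst ⁻¹' s, ENNReal.ofReal (-(p.2 - p.1)) ∂D := by
        have h2 : (∫⁻ p in Prod.fst ⁻¹' s, ENNReal.ofReal (-(p.2 - p.1)) ∂D)
            = ∫⁻ p in Prod.fst ⁻¹' s, ENNReal.ofReal (p.1 - p.2) ∂D := by
          congr 1; ext p; ring_nf
        rw [h2]
        exact (ENNReal.toReal_eq_toReal_iff' hfin1.ne hfin2.ne).1 (by rw [← h2] at hfin2 ⊢; exact this)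
      simpa using heq
    -- νp is the pushforward of its fst-marginal along x ↦ (x, 1)
    have hsec : ∀ (c : ℝ) (w : ℝ × ℝ → ℝ≥0∞), Measurable w →
        (∀ᵐ p ∂D, p.2 ≠ c → w p = 0) →
        D.withDensity w = ((D.withDensity w).map Prod.fst).map (fun x => (x, c)) := by
      intro c w hw hw0
      have hι : Measurable fun x : ℝ => (x, c) := measurable_id.prodMk measurable_const
      ext s hs
      rw [Measure.map_apply hι hs, Measure.map_apply measurable_fst (hι hs),
        withDensity_apply _ hs, withDensity_apply _ (measurable_fst (hι hs))]
      rw [← lintegral_indicator hs, ← lintegral_indicator (measurable_fst (hι hs))]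
      refine lintegral_congr_ae ?_
      filter_upwards [hw0] with p hp
      by_cases hc : p.2 = c
      · have hpp : p = (p.1, c) := by rw [← hc]
        by_cases hms : p ∈ s
        · rw [Set.indicator_of_mem hms, Set.indicator_of_mem (by rw [hpp] at hms; exact hms)]
        · rw [Set.indicator_of_notMem hms,
            Set.indicator_of_notMem (by rw [hpp] at hms; exact hms)]
      · have hw0' : w p = 0 := hp hc
        classical
        rw [Set.indicator_apply, Set.indicator_apply, hw0']
        simp
    have hwp0 : ∀ᵐ p ∂D, p.2 ≠ 1 → wp p = 0 := by
      filter_upwards [hsupp] with p hp h1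
      rcases hp with ⟨⟨hf0, hf1⟩, hy⟩
      rcases hy with hy | hy
      · rw [hwp]; simp only [hy]; exact ENNReal.ofReal_eq_zero.2 (by linarith)
      · exact absurd hy h1
    have hwm0 : ∀ᵐ p ∂D, p.2 ≠ 0 → wm p = 0 := by
      filter_upwards [hsupp] with p hp h1
      rcases hp with ⟨⟨hf0, hf1⟩, hy⟩
      rcases hy with hy | hy
      · exact absurd hy h1
      · rw [hwm]; simp only [hy]; exact ENNReal.ofReal_eq_zero.2 (by linarith)
    have hνp_eq : νp = (νp.map Prod.fst).map (fun x => (x, (1:ℝ))) := hsec 1 wp hwp_meas hwp0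
    have hνm_eq : νm = (νm.map Prod.fst).map (fun x => (x, (0:ℝ))) := hsec 0 wm hwm_meas hwm0
    -- a.e.-measurability of G ∘ fst w.r.t. νp and νm
    have hGfst : ∀ (w : ℝ × ℝ → ℝ≥0∞), Measurable w → (∀ p, w p ≠ ∞) →
        AEMeasurable (fun p => G p.1 * w p) D →
        AEMeasurable (fun p : ℝ × ℝ => G p.1) (D.withDensity w) := by
      intro w hw hwt hF
      have habs : D.withDensity w ≪ D := withDensity_absolutelyContinuous D w
      have hFw : AEMeasurable (fun p => (G p.1 * w p) / w p) (D.withDensity w) :=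
        (hF.mono_ac habs).div (hw.aemeasurable.mono_ac habs)
      refine hFw.congr ?_
      have hne : ∀ᵐ p ∂(D.withDensity w), w p ≠ 0 := by
        rw [ae_iff]
        have hset : {p | ¬ w p ≠ 0} = w ⁻¹' {0} := by ext p; simp
        rw [hset, withDensity_apply _ (hw (measurableSet_singleton 0)),
          setLIntegral_congr_fun (hw (measurableSet_singleton 0))
            (fun p (hp : w p = 0) => hp)]
        simp
      filter_upwards [hne] with p hp
      rw [mul_div_assoc, ENNReal.div_self hp (hwt p), mul_one]
    have hh_meas : AEStronglyMeasurable h D := hint.aestronglyMeasurable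
    have hFp_aem : AEMeasurable (fun p => G p.1 * wp p) D := by
      have : AEMeasurable (fun p => ENNReal.ofReal (h p)) D :=
        hh_meas.aemeasurable.ennreal_ofReal
      exact this.congr (ae_of_all _ hFp)
    have hFm_aem : AEMeasurable (fun p => G p.1 * wm p) D := by
      have : AEMeasurable (fun p => ENNReal.ofReal (-h p)) D :=
        (hh_meas.aemeasurable.neg).ennreal_ofReal
      exact this.congr (ae_of_all _ hFm)
    have hGp : AEMeasurable (fun p : ℝ × ℝ => G p.1) νp :=
      hGfst wp hwp_meas (fun p => ENNReal.ofReal_ne_top) hFp_aem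
    have hGm : AEMeasurable (fun p : ℝ × ℝ => G p.1) νm :=
      hGfst wm hwm_meas (fun p => ENNReal.ofReal_ne_top) hFm_aem
    -- chain of lintegral equalities
    have key : (∫⁻ p, ENNReal.ofReal (h p) ∂D) = ∫⁻ p, ENNReal.ofReal (-h p) ∂D := by
      have e1 : (∫⁻ p, ENNReal.ofReal (h p) ∂D) = ∫⁻ p, (fun q : ℝ × ℝ => G q.1) p ∂νp := by
        rw [hνp, lintegral_withDensity_eq_lintegral_mul_non_measurable D hwp_meas hwp_fin]
        exact lintegral_congr fun p => by rw [hFp p]; exact (mul_comm _ _)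
      have e2 : (∫⁻ p, ENNReal.ofReal (-h p) ∂D) = ∫⁻ p, (fun q : ℝ × ℝ => G q.1) p ∂νm := by
        rw [hνm, lintegral_withDensity_eq_lintegral_mul_non_measurable D hwm_meas hwm_fin]
        exact lintegral_congr fun p => by rw [hFm p]; exact (mul_comm _ _)
      rw [e1, e2]
      have hι1 : AEMeasurable (fun x : ℝ => (x, (1:ℝ))) (νp.map Prod.fst) :=
        (measurable_id.prodMk measurable_const).aemeasurable
      have hι0 : AEMeasurable (fun x : ℝ => (x, (0:ℝ))) (νm.map Prod.fst) :=
        (measurable_id.prodMk measurable_const).aemeasurable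
      have e3 : (∫⁻ p, (fun q : ℝ × ℝ => G q.1) p ∂νp) = ∫⁻ x, G x ∂(νp.map Prod.fst) := by
        conv_lhs => rw [hνp_eq]
        rw [← hmapeq] at *
        exact lintegral_map' (by rw [← hνp_eq]; exact hGp) hι1
      have e4 : (∫⁻ p, (fun q : ℝ × ℝ => G q.1) p ∂νm) = ∫⁻ x, G x ∂(νm.map Prod.fst) := by
        conv_lhs => rw [hνm_eq]
        exact lintegral_map' (by rw [← hνm_eq]; exact hGm) hι0
      rw [e3, e4, hmapeq]
    rw [integral_eq_lintegral_pos_part_sub_lintegral_neg_part hint, key, sub_self]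
  · exact integral_undef hint

/-- A perfectly calibrated distribution has `smECE_K(D) = 0` for any
non-negative kernel `K` on an interval `U ⊇ [0,1]`. -/
theorem smECEK_eq_zero_of_perfectlyCalibrated
    (U : Set ℝ) (hU : Icc (0 : ℝ) 1 ⊆ U) (hUconn : U.OrdConnected) (hUmeas : MeasurableSet U)
    (K : ℝ → ℝ → ℝ) (hKnn : ∀ t₁ t₂, 0 ≤ K t₁ t₂)
    (D : Measure (ℝ × ℝ)) (hD : PerfectlyCalibrated D) :
    smECEK U K D = 0 := by
  unfold smECEK
  have : ∀ t : ℝ, |∫ p, K t p.1 * (p.2 - p.1) ∂D| = 0 := by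
    intro t
    rw [inner_integral_eq_zero D hD (K t) (hKnn t), abs_zero]
  simp only [this, integral_zero]
end
end

section
/- For any probability distribution D over [0,1]×{0,1}, dCE_{ℓ₁}(D) ≤ dCE(D), and there is a universal constant c > 0 such that c·dCE(D) ≤ dCE_{ℓ₁}(D). -/
open MeasureTheory Real Set
open scoped ENNReal

noncomputable section

/-- Wasserstein-1 distance for an (extended-real-valued) cost `c`:
the infimum over all couplings of the expected cost. -/
def W1 (c : ℝ × ℝ → ℝ × ℝ → ℝ≥0∞) (μ ν : Measure (ℝ × ℝ)) : ℝ≥0∞ :=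
  ⨅ γ ∈ {γ : Measure ((ℝ × ℝ) × (ℝ × ℝ)) | γ.map Prod.fst = μ ∧ γ.map Prod.snd = ν},
    ∫⁻ p, c p.1 p.2 ∂γ

/-- Distance to calibration: Wasserstein-1 distance (w.r.t. cost `c`) from `D`
to the set of perfectly calibrated distributions. -/
def dCECost (c : ℝ × ℝ → ℝ × ℝ → ℝ≥0∞) (D : Measure (ℝ × ℝ)) : ℝ≥0∞ :=
  ⨅ D' ∈ {D' : Measure (ℝ × ℝ) | PerfectlyCalibrated D'}, W1 c D D'

/-- The cost of `dCE`: `|f₁ - f₂|` if `y₁ = y₂`, else `∞`. -/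
def costInf (p q : ℝ × ℝ) : ℝ≥0∞ :=
  if p.2 = q.2 then ENNReal.ofReal |p.1 - q.1| else ⊤

/-- The lower distance to calibration `dCE`. -/
def dCE (D : Measure (ℝ × ℝ)) : ℝ≥0∞ := dCECost costInf D

/-- The `ℓ₁` cost `|f₁ - f₂| + |y₁ - y₂|` on `[0,1] × {0,1}`. -/
def costL1 (p q : ℝ × ℝ) : ℝ≥0∞ :=
  ENNReal.ofReal (|p.1 - q.1| + |p.2 - q.2|)

/-- The lower distance to calibration w.r.t. the `ℓ₁` metric. -/
def dCEl1 (D : Measure (ℝ × ℝ)) : ℝ≥0∞ := dCECost costL1 D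


namespace DCEwork

abbrev Om := (ℝ × ℝ) × (ℝ × ℝ)

def Mset : Set Om := {x | x.1.2 = x.2.2}
def S1 : Set Om := {x | x.2.2 = 1}
def S0 : Set Om := {x | x.2.2 = 0}
def Lf : Om → ℝ := fun x => x.2.1

lemma measurable_Lf : Measurable Lf := measurable_fst.comp measurable_snd

lemma measurableSet_Mset : MeasurableSet Mset :=
  measurableSet_eq_fun (measurable_fst.snd) (measurable_snd.snd)

lemma measurableSet_S1 : MeasurableSet S1 := measurable_snd.snd (measurableSet_singleton 1)
lemma measurableSet_S0 : MeasurableSet S0 := measurable_snd.snd (measurableSet_singleton 0)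

lemma map_withDensity_comp {α β : Type*} [MeasurableSpace α] [MeasurableSpace β]
    (μ : Measure α) {T : α → β} (hT : Measurable T) {f : β → ℝ≥0∞} (hf : Measurable f) :
    (μ.withDensity (f ∘ T)).map T = (μ.map T).withDensity f := by
  ext s hs
  rw [Measure.map_apply hT hs, withDensity_apply _ (hT hs), withDensity_apply _ hs,
    setLIntegral_map hs hf hT]
  rfl

lemma theta_mul (a b : ℝ≥0∞) (hb : b ≠ ⊤) : min 1 (a / b) * b = min a b := by
  rcases eq_or_ne b 0 with h | h
  · simp [h]
  by_cases hle : a ≤ b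
  · rw [min_eq_right (ENNReal.div_le_of_le_mul (by simpa using hle)),
      ENNReal.div_mul_cancel h hb, min_eq_left hle]
  · rw [min_eq_left ((ENNReal.le_div_iff_mul_le (Or.inl h) (Or.inl hb)).mpr (by
      simpa using le_of_not_ge hle)), one_mul, min_eq_right (le_of_not_ge hle)]

lemma one_sub_theta_mul (a b : ℝ≥0∞) (hb : b ≠ ⊤) : (1 - min 1 (a / b)) * b = b - a := by
  rcases eq_or_ne b 0 with h | h
  · simp [h, eq_comm, tsub_eq_zero_of_le]
  by_cases hle : a ≤ b
  · rw [min_eq_right (ENNReal.div_le_of_le_mul (by simpa using hle)),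
      ENNReal.sub_mul (fun _ _ => hb), one_mul, ENNReal.div_mul_cancel h hb]
  · rw [min_eq_left ((ENNReal.le_div_iff_mul_le (Or.inl h) (Or.inl hb)).mpr (by
      simpa using le_of_not_ge hle)), tsub_self, zero_mul, eq_comm]
    exact tsub_eq_zero_of_le (le_of_not_ge hle)

end DCEwork

namespace DCEwork

variable (γ : Measure Om)

def mPart (s : Set Om) : Measure ℝ := (γ.restrict s).map Lf
def mA1 : Measure ℝ := mPart γ (Mset ∩ S1)
def mA0 : Measure ℝ := mPart γ (Mset ∩ S0)
def mB1 : Measure ℝ := mPart γ (Msetᶜ ∩ S1)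
def mB0 : Measure ℝ := mPart γ (Msetᶜ ∩ S0)
def rho : Measure ℝ := mA1 γ + mA0 γ + mB1 γ + mB0 γ
def nu1 : Measure ℝ := mPart γ S1
def nu0 : Measure ℝ := mPart γ S0
def hA1 : ℝ → ℝ≥0∞ := (mA1 γ).rnDeriv (rho γ)
def hA0 : ℝ → ℝ≥0∞ := (mA0 γ).rnDeriv (rho γ)
def hB1 : ℝ → ℝ≥0∞ := (mB1 γ).rnDeriv (rho γ)
def hB0 : ℝ → ℝ≥0∞ := (mB0 γ).rnDeriv (rho γ)
def k1 : ℝ → ℝ≥0∞ := fun v => ENNReal.ofReal (1 - v)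
def k0 : ℝ → ℝ≥0∞ := fun v => ENNReal.ofReal v
def u1 : ℝ → ℝ≥0∞ := fun v => k1 v * hA1 γ v
def u0 : ℝ → ℝ≥0∞ := fun v => k0 v * hA0 γ v
def th1 : ℝ → ℝ≥0∞ := fun v => min 1 (u0 γ v / u1 γ v)
def th0 : ℝ → ℝ≥0∞ := fun v => min 1 (u1 γ v / u0 γ v)
def Th : Om → ℝ≥0∞ :=
  (Mset ∩ S1).indicator (fun x => th1 γ (Lf x)) + (Mset ∩ S0).indicator (fun x => th0 γ (Lf x))
def gmap : Om → Om := fun x => (x.1, (x.1.2, x.1.2))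
def gam2 : Measure Om := γ.withDensity (Th γ) + (γ.withDensity (1 - Th γ)).map gmap
def D2 : Measure (ℝ × ℝ) := (gam2 γ).map Prod.snd

lemma measurable_gmap : Measurable gmap :=
  measurable_fst.prodMk ((measurable_fst.snd).prodMk (measurable_fst.snd))

lemma measurable_k1 : Measurable k1 :=
  ENNReal.measurable_ofReal.comp (measurable_const.sub measurable_id)
lemma measurable_k0 : Measurable k0 := ENNReal.measurable_ofReal
lemma measurable_u1 : Measurable (u1 γ) :=
  measurable_k1.mul (Measure.measurable_rnDeriv _ _)
lemma measurable_u0 : Measurable (u0 γ) :=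
  measurable_k0.mul (Measure.measurable_rnDeriv _ _)
lemma measurable_th1 : Measurable (th1 γ) :=
  measurable_const.min ((measurable_u0 γ).div (measurable_u1 γ))
lemma measurable_th0 : Measurable (th0 γ) :=
  measurable_const.min ((measurable_u1 γ).div (measurable_u0 γ))
lemma measurable_Th : Measurable (Th γ) :=
  (((measurable_th1 γ).comp measurable_Lf).indicator
    (measurableSet_Mset.inter measurableSet_S1)).add
   (((measurable_th0 γ).comp measurable_Lf).indicator
    (measurableSet_Mset.inter measurableSet_S0))

lemma S1_disj_S0 : Disjoint S1 S0 := by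
  rw [Set.disjoint_left]; rintro x h1 h0
  exact one_ne_zero (h1.symm.trans h0 : (1:ℝ) = 0)

lemma Th_le_one : Th γ ≤ 1 := by
  intro x
  unfold Th
  by_cases h1 : x ∈ Mset ∩ S1
  · have h0 : x ∉ Mset ∩ S0 := fun h => S1_disj_S0.ne_of_mem h1.2 h.2 rfl
    simp only [Pi.add_apply, Set.indicator_of_mem h1, Set.indicator_of_notMem h0, add_zero]
    exact min_le_left _ _
  · simp only [Pi.add_apply, Set.indicator_of_notMem h1, zero_add]
    by_cases h0 : x ∈ Mset ∩ S0
    · simp only [Set.indicator_of_mem h0]; exact min_le_left _ _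
    · simp [Set.indicator_of_notMem h0]

instance (s : Set Om) [IsFiniteMeasure γ] : IsFiniteMeasure (mPart γ s) := by
  constructor
  rw [mPart, Measure.map_apply measurable_Lf MeasurableSet.univ]
  exact lt_of_le_of_lt (le_trans (Measure.restrict_le_self _) (le_refl _)) (measure_lt_top γ _)

instance [IsFiniteMeasure γ] : IsFiniteMeasure (mA1 γ) := by rw [mA1]; infer_instance
instance [IsFiniteMeasure γ] : IsFiniteMeasure (mA0 γ) := by rw [mA0]; infer_instance
instance [IsFiniteMeasure γ] : IsFiniteMeasure (mB1 γ) := by rw [mB1]; infer_instance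
instance [IsFiniteMeasure γ] : IsFiniteMeasure (mB0 γ) := by rw [mB0]; infer_instance
instance [IsFiniteMeasure γ] : IsFiniteMeasure (rho γ) := by rw [rho]; infer_instance
instance [IsFiniteMeasure γ] : IsFiniteMeasure (nu1 γ) := by rw [nu1]; infer_instance
instance [IsFiniteMeasure γ] : IsFiniteMeasure (nu0 γ) := by rw [nu0]; infer_instance

lemma mA1_ac : mA1 γ ≪ rho γ :=
  Measure.absolutelyContinuous_of_le
    (Measure.le_add_right (Measure.le_add_right (Measure.le_add_right le_rfl)))
lemma mA0_ac : mA0 γ ≪ rho γ :=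
  Measure.absolutelyContinuous_of_le
    (Measure.le_add_right (Measure.le_add_right (Measure.le_add_left le_rfl)))
lemma mB1_ac : mB1 γ ≪ rho γ :=
  Measure.absolutelyContinuous_of_le (Measure.le_add_right (Measure.le_add_left le_rfl))
lemma mB0_ac : mB0 γ ≪ rho γ :=
  Measure.absolutelyContinuous_of_le (Measure.le_add_left le_rfl)

end DCEwork

namespace DCEwork

/-- `D` is a distribution of prediction-outcome pairs over `[0,1] × {0,1}` (copy). -/
def SuppOn (D : Measure (ℝ × ℝ)) : Prop :=
  ∀ᵐ p ∂D, p.1 ∈ Icc (0 : ℝ) 1 ∧ (p.2 = 0 ∨ p.2 = 1)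

lemma measurableSet_supp : MeasurableSet {p : ℝ × ℝ | p.1 ∈ Icc (0:ℝ) 1 ∧ (p.2 = 0 ∨ p.2 = 1)} :=
  (measurable_fst measurableSet_Icc).inter
    ((measurable_snd (measurableSet_singleton 0)).union
      (measurable_snd (measurableSet_singleton 1)))

variable (γ : Measure Om)

lemma ae_fst_supp {D : Measure (ℝ × ℝ)} (hfst : γ.map Prod.fst = D) (hD : SuppOn D) :
    ∀ᵐ x ∂γ, x.1.1 ∈ Icc (0:ℝ) 1 ∧ (x.1.2 = 0 ∨ x.1.2 = 1) := by
  rw [← hfst] at hD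
  exact (ae_map_iff measurable_fst.aemeasurable measurableSet_supp).mp hD

lemma ae_snd_supp {D' : Measure (ℝ × ℝ)} (hsnd : γ.map Prod.snd = D') (hD' : SuppOn D') :
    ∀ᵐ x ∂γ, x.2.1 ∈ Icc (0:ℝ) 1 ∧ (x.2.2 = 0 ∨ x.2.2 = 1) := by
  rw [← hsnd] at hD'
  exact (ae_map_iff measurable_snd.aemeasurable measurableSet_supp).mp hD'

lemma ae_mPart_mem (s : Set Om) (h2 : ∀ᵐ x ∂γ, x.2.1 ∈ Icc (0:ℝ) 1) :
    ∀ᵐ v ∂(mPart γ s), v ∈ Icc (0:ℝ) 1 :=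
  (ae_map_iff measurable_Lf.aemeasurable measurableSet_Icc).mpr (ae_restrict_of_ae h2)

lemma ae_rho_mem (h2 : ∀ᵐ x ∂γ, x.2.1 ∈ Icc (0:ℝ) 1) :
    ∀ᵐ v ∂(rho γ), v ∈ Icc (0:ℝ) 1 := by
  rw [rho, ae_add_measure_iff, ae_add_measure_iff, ae_add_measure_iff]
  exact ⟨⟨⟨ae_mPart_mem γ _ h2, ae_mPart_mem γ _ h2⟩, ae_mPart_mem γ _ h2⟩, ae_mPart_mem γ _ h2⟩

lemma nu1_eq : nu1 γ = mA1 γ + mB1 γ := by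
  have hu : (Mset ∩ S1) ∪ (Msetᶜ ∩ S1) = S1 := by
    rw [← Set.union_inter_distrib_right, Set.union_compl_self, Set.univ_inter]
  have hd : Disjoint (Mset ∩ S1) (Msetᶜ ∩ S1) :=
    Disjoint.mono Set.inter_subset_left Set.inter_subset_left disjoint_compl_right
  rw [nu1, mA1, mB1, mPart, mPart, mPart, ← Measure.map_add _ _ measurable_Lf,
    ← Measure.restrict_union hd (measurableSet_Mset.compl.inter measurableSet_S1), hu]

lemma nu0_eq : nu0 γ = mA0 γ + mB0 γ := by
  have hu : (Mset ∩ S0) ∪ (Msetᶜ ∩ S0) = S0 := by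
    rw [← Set.union_inter_distrib_right, Set.union_compl_self, Set.univ_inter]
  have hd : Disjoint (Mset ∩ S0) (Msetᶜ ∩ S0) :=
    Disjoint.mono Set.inter_subset_left Set.inter_subset_left disjoint_compl_right
  rw [nu0, mA0, mB0, mPart, mPart, mPart, ← Measure.map_add _ _ measurable_Lf,
    ← Measure.restrict_union hd (measurableSet_Mset.compl.inter measurableSet_S0), hu]

lemma nu1_eq_map {D' : Measure (ℝ × ℝ)} (hsnd : γ.map Prod.snd = D') :
    nu1 γ = (D'.restrict {p : ℝ × ℝ | p.2 = 1}).map Prod.fst := by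
  rw [← hsnd,
    Measure.restrict_map measurable_snd
      (show MeasurableSet {p : ℝ × ℝ | p.2 = 1} from measurable_snd (measurableSet_singleton 1)),
    Measure.map_map measurable_fst measurable_snd]
  rfl

lemma nu0_eq_map {D' : Measure (ℝ × ℝ)} (hsnd : γ.map Prod.snd = D') :
    nu0 γ = (D'.restrict {p : ℝ × ℝ | p.2 = 0}).map Prod.fst := by
  rw [← hsnd,
    Measure.restrict_map measurable_snd
      (show MeasurableSet {p : ℝ × ℝ | p.2 = 0} from measurable_snd (measurableSet_singleton 0)),
    Measure.map_map measurable_fst measurable_snd]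
  rfl

end DCEwork

namespace DCEwork

variable (γ : Measure Om)

lemma calib_nu {D' : Measure (ℝ × ℝ)} [IsFiniteMeasure D'] (hsnd : γ.map Prod.snd = D')
    (hsupp : SuppOn D')
    (hc : ∀ s : Set ℝ, MeasurableSet s → ∫ p in Prod.fst ⁻¹' s, (p.2 - p.1) ∂D' = 0) :
    (nu1 γ).withDensity k1 = (nu0 γ).withDensity k0 := by
  have hγfin : IsFiniteMeasure γ := by
    constructor
    have : (γ.map Prod.snd) Set.univ = D' Set.univ := by rw [hsnd]
    rw [Measure.map_apply measurable_snd MeasurableSet.univ] at this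
    rw [show (Prod.snd ⁻¹' Set.univ : Set Om) = Set.univ from rfl] at this
    rw [this]
    exact measure_lt_top D' _
  set T1 : Set (ℝ × ℝ) := {p | p.2 = 1} with hT1def
  set T0 : Set (ℝ × ℝ) := {p | p.2 = 0} with hT0def
  have hT1 : MeasurableSet T1 := measurable_snd (measurableSet_singleton 1)
  have hT0 : MeasurableSet T0 := measurable_snd (measurableSet_singleton 0)
  have hres0 : D'.restrict ((T1 ∪ T0)ᶜ) = 0 := by
    rw [Measure.restrict_eq_zero]
    have h2 : ∀ᵐ p ∂D', p ∈ T1 ∪ T0 :=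
      hsupp.mono (fun p hp => hp.2.elim (fun h => Or.inr h) (fun h => Or.inl h))
    exact ae_iff.mp h2
  have hfull : D' = D'.restrict T1 + D'.restrict T0 := by
    have h1 : D'.restrict (T1 ∪ T0) + D'.restrict ((T1 ∪ T0)ᶜ) = D' :=
      Measure.restrict_add_restrict_compl (hT1.union hT0)
    rw [hres0, add_zero] at h1
    have hd : Disjoint T1 T0 := by
      rw [Set.disjoint_left]
      rintro p h1' h0'
      exact one_ne_zero ((h1'.symm.trans h0' : (1:ℝ) = 0))
    conv_lhs => rw [← h1, Measure.restrict_union hd hT0]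
  have hbound : ∀ᵐ p ∂D', ‖p.2 - p.1‖ ≤ 2 := by
    refine hsupp.mono (fun p hp => ?_)
    rcases hp.2 with h | h <;> rw [Real.norm_eq_abs, h, abs_le] <;>
      constructor <;> linarith [hp.1.1, hp.1.2]
  have hint : Integrable (fun p : ℝ × ℝ => p.2 - p.1) D' :=
    Integrable.mono' (integrable_const 2)
      (measurable_snd.sub measurable_fst).aestronglyMeasurable hbound
  have hγ2 : ∀ᵐ x ∂γ, x.2.1 ∈ Icc (0:ℝ) 1 := (ae_snd_supp γ hsnd hsupp).mono fun x hx => hx.1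
  have hreal : ∀ s : Set ℝ, MeasurableSet s →
      ∫ t in s, (1 - t) ∂(nu1 γ) = ∫ t in s, t ∂(nu0 γ) := by
    intro s hs
    have hA : MeasurableSet (Prod.fst ⁻¹' s : Set (ℝ × ℝ)) := measurable_fst hs
    have h0 := hc s hs
    have hsplit : ∫ p in Prod.fst ⁻¹' s, (p.2 - p.1) ∂D' =
        ∫ p in Prod.fst ⁻¹' s, (p.2 - p.1) ∂(D'.restrict T1) +
        ∫ p in Prod.fst ⁻¹' s, (p.2 - p.1) ∂(D'.restrict T0) := by
      conv_lhs => rw [hfull]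
      rw [Measure.restrict_add]
      exact integral_add_measure
        (hint.mono_measure ((Measure.restrict_le_self).trans (Measure.restrict_le_self)))
        (hint.mono_measure ((Measure.restrict_le_self).trans (Measure.restrict_le_self)))
    have e1 : ∫ p in Prod.fst ⁻¹' s, (p.2 - p.1) ∂(D'.restrict T1)
        = ∫ t in s, (1 - t) ∂(nu1 γ) := by
      have hae : ∀ᵐ p ∂((D'.restrict T1).restrict (Prod.fst ⁻¹' s)), p ∈ T1 :=
        ae_restrict_of_ae (ae_restrict_mem hT1)
      rw [integral_congr_ae (g := fun p : ℝ × ℝ => 1 - p.1)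
        (hae.mono (fun p hp => by rw [show p.2 = (1:ℝ) from hp]))]
      rw [nu1_eq_map γ hsnd, setIntegral_map hs (by fun_prop) measurable_fst.aemeasurable]
    have e0 : ∫ p in Prod.fst ⁻¹' s, (p.2 - p.1) ∂(D'.restrict T0)
        = - ∫ t in s, t ∂(nu0 γ) := by
      have hae : ∀ᵐ p ∂((D'.restrict T0).restrict (Prod.fst ⁻¹' s)), p ∈ T0 :=
        ae_restrict_of_ae (ae_restrict_mem hT0)
      rw [integral_congr_ae (g := fun p : ℝ × ℝ => -p.1)
        (hae.mono (fun p hp => by rw [show p.2 = (0:ℝ) from hp]; ring))]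
      rw [nu0_eq_map γ hsnd, ← integral_neg, setIntegral_map (f := fun t : ℝ => -t) hs
        (by fun_prop) measurable_fst.aemeasurable]
    rw [hsplit, e1, e0] at h0
    linarith
  ext s hs
  rw [withDensity_apply _ hs, withDensity_apply _ hs]
  have hicc1 : ∀ᵐ t ∂((nu1 γ).restrict s), t ∈ Icc (0:ℝ) 1 :=
    ae_restrict_of_ae (ae_mPart_mem γ _ hγ2)
  have hicc0 : ∀ᵐ t ∂((nu0 γ).restrict s), t ∈ Icc (0:ℝ) 1 :=
    ae_restrict_of_ae (ae_mPart_mem γ _ hγ2)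
  have l1 : ∫⁻ t in s, k1 t ∂(nu1 γ) = ENNReal.ofReal (∫ t in s, (1 - t) ∂(nu1 γ)) := by
    have hi : Integrable (fun t : ℝ => 1 - t) ((nu1 γ).restrict s) := by
      refine Integrable.mono' (integrable_const 1)
        ((measurable_const.sub measurable_id).aestronglyMeasurable) (hicc1.mono fun t ht => ?_)
      rw [Real.norm_eq_abs, abs_le]; constructor <;> linarith [ht.1, ht.2]
    have hn : 0 ≤ᵐ[(nu1 γ).restrict s] (fun t : ℝ => 1 - t) :=
      hicc1.mono fun t ht => by simp only [Pi.zero_apply]; linarith [ht.2]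
    rw [ofReal_integral_eq_lintegral_ofReal hi hn]; rfl
  have l0 : ∫⁻ t in s, k0 t ∂(nu0 γ) = ENNReal.ofReal (∫ t in s, t ∂(nu0 γ)) := by
    have hi : Integrable (fun t : ℝ => t) ((nu0 γ).restrict s) := by
      refine Integrable.mono' (integrable_const 1)
        (measurable_id.aestronglyMeasurable) (hicc0.mono fun t ht => ?_)
      rw [Real.norm_eq_abs, abs_le]; constructor <;> linarith [ht.1, ht.2]
    have hn : 0 ≤ᵐ[(nu0 γ).restrict s] (fun t : ℝ => t) :=
      hicc0.mono fun t ht => by simp only [Pi.zero_apply]; linarith [ht.1]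
    rw [ofReal_integral_eq_lintegral_ofReal hi hn]; rfl
  rw [l1, l0, hreal s hs]

end DCEwork

namespace DCEwork

variable (γ : Measure Om)

lemma nu1_wd : [IsFiniteMeasure γ] →
    (nu1 γ).withDensity k1 =
      (rho γ).withDensity (fun v => (hA1 γ v + hB1 γ v) * k1 v) := by
  intro _
  have h1 : nu1 γ = (rho γ).withDensity (fun v => hA1 γ v + hB1 γ v) := by
    rw [nu1_eq, ← Measure.withDensity_rnDeriv_eq _ _ (mA1_ac γ),
      ← Measure.withDensity_rnDeriv_eq _ _ (mB1_ac γ),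
      ← withDensity_add_left (Measure.measurable_rnDeriv _ _)]
    rfl
  rw [h1]
  exact (withDensity_mul _ ((Measure.measurable_rnDeriv _ _).add
    (Measure.measurable_rnDeriv _ _)) measurable_k1).symm

lemma nu0_wd : [IsFiniteMeasure γ] →
    (nu0 γ).withDensity k0 =
      (rho γ).withDensity (fun v => (hA0 γ v + hB0 γ v) * k0 v) := by
  intro _
  have h1 : nu0 γ = (rho γ).withDensity (fun v => hA0 γ v + hB0 γ v) := by
    rw [nu0_eq, ← Measure.withDensity_rnDeriv_eq _ _ (mA0_ac γ),
      ← Measure.withDensity_rnDeriv_eq _ _ (mB0_ac γ),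
      ← withDensity_add_left (Measure.measurable_rnDeriv _ _)]
    rfl
  rw [h1]
  exact (withDensity_mul _ ((Measure.measurable_rnDeriv _ _).add
    (Measure.measurable_rnDeriv _ _)) measurable_k0).symm

lemma key_ae [IsFiniteMeasure γ] (hicc : ∀ᵐ v ∂(nu1 γ), v ∈ Icc (0:ℝ) 1)
    (hmeq : (nu1 γ).withDensity k1 = (nu0 γ).withDensity k0) :
    ∀ᵐ v ∂(rho γ), (hA1 γ v + hB1 γ v) * k1 v = (hA0 γ v + hB0 γ v) * k0 v := by
  have e1 := nu1_wd γ
  have e0 := nu0_wd γ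
  have hm1 : Measurable (fun v => (hA1 γ v + hB1 γ v) * k1 v) :=
    ((Measure.measurable_rnDeriv _ _).add (Measure.measurable_rnDeriv _ _)).mul measurable_k1
  have hm0 : Measurable (fun v => (hA0 γ v + hB0 γ v) * k0 v) :=
    ((Measure.measurable_rnDeriv _ _).add (Measure.measurable_rnDeriv _ _)).mul measurable_k0
  have hfin : ∫⁻ v, (hA1 γ v + hB1 γ v) * k1 v ∂(rho γ) ≠ ⊤ := by
    have h2 : ((rho γ).withDensity (fun v => (hA1 γ v + hB1 γ v) * k1 v)) Set.univ
        = ((nu1 γ).withDensity k1) Set.univ := by rw [e1]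
    rw [withDensity_apply _ MeasurableSet.univ, Measure.restrict_univ,
      withDensity_apply _ MeasurableSet.univ, Measure.restrict_univ] at h2
    rw [h2]
    have hle : ∫⁻ v, k1 v ∂(nu1 γ) ≤ ∫⁻ _, 1 ∂(nu1 γ) := by
      refine lintegral_mono_ae (hicc.mono fun v hv => ?_)
      exact ENNReal.ofReal_le_one.mpr (by linarith [hv.1])
    rw [lintegral_one] at hle
    exact (lt_of_le_of_lt hle (measure_lt_top _ _)).ne
  exact (withDensity_eq_iff hm1.aemeasurable hm0.aemeasurable hfin).mp
    (e1.symm.trans (hmeq.trans e0))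

end DCEwork

namespace DCEwork

variable (γ : Measure Om)

lemma wd_sum : γ.withDensity (Th γ) + γ.withDensity (1 - Th γ) = γ := by
  rw [← withDensity_add_left (measurable_Th γ) (1 - Th γ)]
  have h : Th γ + (1 - Th γ) = 1 := by
    funext x
    exact add_tsub_cancel_of_le (Th_le_one γ x)
  rw [h, withDensity_one]

lemma gam2_fst {D : Measure (ℝ × ℝ)} (hfst : γ.map Prod.fst = D) :
    (gam2 γ).map Prod.fst = D := by
  rw [gam2, Measure.map_add _ _ measurable_fst,
    Measure.map_map measurable_fst measurable_gmap]
  have h : (Prod.fst ∘ gmap) = (Prod.fst : Om → ℝ × ℝ) := rfl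
  rw [h, ← Measure.map_add _ _ measurable_fst, wd_sum, hfst]

lemma gam2_univ : (gam2 γ) Set.univ = γ Set.univ := by
  have h := congrArg (fun μ : Measure (ℝ × ℝ) => μ Set.univ) (gam2_fst γ (D := γ.map Prod.fst) rfl)
  simpa [Measure.map_apply measurable_fst MeasurableSet.univ] using h

lemma D2_univ : (D2 γ) Set.univ = γ Set.univ := by
  rw [D2, Measure.map_apply measurable_snd MeasurableSet.univ]
  exact gam2_univ γ

lemma D2_supp (h1s : ∀ᵐ x ∂γ, x.1.1 ∈ Icc (0:ℝ) 1 ∧ (x.1.2 = 0 ∨ x.1.2 = 1))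
    (h2s : ∀ᵐ x ∂γ, x.2.1 ∈ Icc (0:ℝ) 1 ∧ (x.2.2 = 0 ∨ x.2.2 = 1)) :
    SuppOn (D2 γ) := by
  rw [SuppOn, D2, gam2, Measure.map_add _ _ measurable_snd, ae_add_measure_iff]
  constructor
  · refine (ae_map_iff measurable_snd.aemeasurable measurableSet_supp).mpr ?_
    exact h2s.filter_mono (withDensity_absolutelyContinuous γ (Th γ)).ae_le
  · rw [Measure.map_map measurable_snd measurable_gmap]
    refine (ae_map_iff (f := fun x : Om => (x.1.2, x.1.2))
      ((measurable_fst.snd).prodMk (measurable_fst.snd)).aemeasurable measurableSet_supp).mpr ?_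
    refine (h1s.filter_mono (withDensity_absolutelyContinuous γ (1 - Th γ)).ae_le).mono ?_
    rintro x ⟨-, h | h⟩ <;> rw [h] <;>
      exact ⟨by constructor <;> norm_num, by norm_num⟩

end DCEwork

namespace DCEwork

variable (γ : Measure Om)

lemma wdTh_split : γ.withDensity (Th γ) =
    (γ.restrict (Mset ∩ S1)).withDensity (fun x => th1 γ (Lf x)) +
    (γ.restrict (Mset ∩ S0)).withDensity (fun x => th0 γ (Lf x)) := by
  rw [Th, withDensity_add_left (((show Measurable (fun x => th1 γ (Lf x)) from
      (measurable_th1 γ).comp measurable_Lf)).indicator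
      (measurableSet_Mset.inter measurableSet_S1)),
    withDensity_indicator (measurableSet_Mset.inter measurableSet_S1),
    withDensity_indicator (measurableSet_Mset.inter measurableSet_S0)]

lemma F1_fst_map :
    ((((γ.restrict (Mset ∩ S1)).withDensity (fun x => th1 γ (Lf x))).map Prod.snd).map Prod.fst)
      = (mA1 γ).withDensity (th1 γ) := by
  rw [Measure.map_map measurable_fst measurable_snd,
    show (Prod.fst ∘ Prod.snd : Om → ℝ) = Lf from rfl,
    show (fun x : Om => th1 γ (Lf x)) = th1 γ ∘ Lf from rfl,
    map_withDensity_comp _ measurable_Lf (measurable_th1 γ)]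
  rfl

lemma F0_fst_map :
    ((((γ.restrict (Mset ∩ S0)).withDensity (fun x => th0 γ (Lf x))).map Prod.snd).map Prod.fst)
      = (mA0 γ).withDensity (th0 γ) := by
  rw [Measure.map_map measurable_fst measurable_snd,
    show (Prod.fst ∘ Prod.snd : Om → ℝ) = Lf from rfl,
    show (fun x : Om => th0 γ (Lf x)) = th0 γ ∘ Lf from rfl,
    map_withDensity_comp _ measurable_Lf (measurable_th0 γ)]
  rfl

lemma lint_A1 [IsFiniteMeasure γ] {s : Set ℝ} (hs : MeasurableSet s) :
    ∫⁻ t in s, ENNReal.ofReal (1 - t) ∂((mA1 γ).withDensity (th1 γ))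
      = ∫⁻ t in s, min (u0 γ t) (u1 γ t) ∂(rho γ) := by
  rw [restrict_withDensity hs,
    lintegral_withDensity_eq_lintegral_mul _ (measurable_th1 γ)
      (show Measurable (fun t : ℝ => ENNReal.ofReal (1 - t)) from measurable_k1)]
  have hmA1 : mA1 γ = (rho γ).withDensity (hA1 γ) :=
    (Measure.withDensity_rnDeriv_eq _ _ (mA1_ac γ)).symm
  rw [hmA1, restrict_withDensity hs,
    lintegral_withDensity_eq_lintegral_mul _ (show Measurable (hA1 γ) from
        Measure.measurable_rnDeriv _ _)
      (show Measurable (th1 γ * fun t : ℝ => ENNReal.ofReal (1 - t)) from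
        (measurable_th1 γ).mul measurable_k1)]
  refine lintegral_congr_ae (ae_restrict_of_ae ?_)
  refine (Measure.rnDeriv_lt_top (mA1 γ) (rho γ)).mono (fun v hv => ?_)
  have hu1 : u1 γ v ≠ ⊤ := ENNReal.mul_ne_top ENNReal.ofReal_ne_top hv.ne
  have h2 : th1 γ v * u1 γ v = min (u0 γ v) (u1 γ v) := theta_mul _ _ hu1
  simp only [Pi.mul_apply]
  calc (mA1 γ).rnDeriv (rho γ) v * (th1 γ v * ENNReal.ofReal (1 - v))
      = th1 γ v * u1 γ v := by simp only [u1, k1, hA1]; ring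
    _ = min (u0 γ v) (u1 γ v) := h2

lemma lint_A0 [IsFiniteMeasure γ] {s : Set ℝ} (hs : MeasurableSet s) :
    ∫⁻ t in s, ENNReal.ofReal t ∂((mA0 γ).withDensity (th0 γ))
      = ∫⁻ t in s, min (u0 γ t) (u1 γ t) ∂(rho γ) := by
  rw [restrict_withDensity hs,
    lintegral_withDensity_eq_lintegral_mul _ (measurable_th0 γ)
      (show Measurable (fun t : ℝ => ENNReal.ofReal t) from measurable_k0)]
  have hmA0 : mA0 γ = (rho γ).withDensity (hA0 γ) :=
    (Measure.withDensity_rnDeriv_eq _ _ (mA0_ac γ)).symm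
  rw [hmA0, restrict_withDensity hs,
    lintegral_withDensity_eq_lintegral_mul _ (show Measurable (hA0 γ) from
        Measure.measurable_rnDeriv _ _)
      (show Measurable (th0 γ * fun t : ℝ => ENNReal.ofReal t) from
        (measurable_th0 γ).mul measurable_k0)]
  refine lintegral_congr_ae (ae_restrict_of_ae ?_)
  refine (Measure.rnDeriv_lt_top (mA0 γ) (rho γ)).mono (fun v hv => ?_)
  have hu0 : u0 γ v ≠ ⊤ := ENNReal.mul_ne_top ENNReal.ofReal_ne_top hv.ne
  have h2 : th0 γ v * u0 γ v = min (u1 γ v) (u0 γ v) := theta_mul _ _ hu0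
  simp only [Pi.mul_apply]
  calc (mA0 γ).rnDeriv (rho γ) v * (th0 γ v * ENNReal.ofReal v)
      = th0 γ v * u0 γ v := by simp only [u0, k0, hA0]; ring
    _ = min (u0 γ v) (u1 γ v) := by rw [h2, min_comm]

end DCEwork

namespace DCEwork

variable (γ : Measure Om)

lemma D2_cal [IsProbabilityMeasure γ]
    (h1s : ∀ᵐ x ∂γ, x.1.1 ∈ Icc (0:ℝ) 1 ∧ (x.1.2 = 0 ∨ x.1.2 = 1))
    (h2s : ∀ᵐ x ∂γ, x.2.1 ∈ Icc (0:ℝ) 1 ∧ (x.2.2 = 0 ∨ x.2.2 = 1)) :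
    ∀ s : Set ℝ, MeasurableSet s → ∫ p in Prod.fst ⁻¹' s, (p.2 - p.1) ∂(D2 γ) = 0 := by
  intro s hs
  have hA : MeasurableSet (Prod.fst ⁻¹' s : Set (ℝ × ℝ)) := measurable_fst hs
  set mu1 : Measure Om := (γ.restrict (Mset ∩ S1)).withDensity (fun x => th1 γ (Lf x)) with hmu1
  set mu0 : Measure Om := (γ.restrict (Mset ∩ S0)).withDensity (fun x => th0 γ (Lf x)) with hmu0
  set Q : Measure Om := γ.withDensity (1 - Th γ) with hQ
  have hD2 : D2 γ = (mu1.map Prod.snd + mu0.map Prod.snd) +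
      Q.map (fun x : Om => (x.1.2, x.1.2)) := by
    rw [D2, gam2, Measure.map_add _ _ measurable_snd, wdTh_split,
      Measure.map_add _ _ measurable_snd, Measure.map_map measurable_snd measurable_gmap]
    rfl
  -- integrability
  have hsupp : SuppOn (D2 γ) := D2_supp γ h1s h2s
  have hbound : ∀ᵐ p ∂(D2 γ), ‖p.2 - p.1‖ ≤ 2 := by
    refine hsupp.mono (fun p hp => ?_)
    rcases hp.2 with h | h <;> rw [Real.norm_eq_abs, h, abs_le] <;>
      constructor <;> linarith [hp.1.1, hp.1.2]
  haveI : IsFiniteMeasure (D2 γ) := by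
    constructor
    rw [D2_univ γ]
    exact measure_lt_top γ _
  have hint : Integrable (fun p : ℝ × ℝ => p.2 - p.1) (D2 γ) :=
    Integrable.mono' (integrable_const 2)
      (measurable_snd.sub measurable_fst).aestronglyMeasurable hbound
  have hle1 : mu1.map Prod.snd ≤ D2 γ := by
    rw [hD2]
    exact Measure.le_add_right (Measure.le_add_right le_rfl)
  have hle0 : mu0.map Prod.snd ≤ D2 γ := by
    rw [hD2]
    exact Measure.le_add_right (Measure.le_add_left le_rfl)
  have hleQ : Q.map (fun x : Om => (x.1.2, x.1.2)) ≤ D2 γ := by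
    rw [hD2]
    exact Measure.le_add_left le_rfl
  have hsplit : ∫ p in Prod.fst ⁻¹' s, (p.2 - p.1) ∂(D2 γ) =
      ∫ p in Prod.fst ⁻¹' s, (p.2 - p.1) ∂(mu1.map Prod.snd) +
      ∫ p in Prod.fst ⁻¹' s, (p.2 - p.1) ∂(mu0.map Prod.snd) +
      ∫ p in Prod.fst ⁻¹' s, (p.2 - p.1) ∂(Q.map (fun x : Om => (x.1.2, x.1.2))) := by
    conv_lhs => rw [hD2]
    rw [Measure.restrict_add, Measure.restrict_add,
      integral_add_measure
        (((hint.mono_measure hle1).restrict).add_measure ((hint.mono_measure hle0).restrict))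
        ((hint.mono_measure hleQ).restrict),
      integral_add_measure ((hint.mono_measure hle1).restrict)
        ((hint.mono_measure hle0).restrict)]
  have eQ : ∫ p in Prod.fst ⁻¹' s, (p.2 - p.1) ∂(Q.map (fun x : Om => (x.1.2, x.1.2))) = 0 := by
    rw [setIntegral_map (f := fun p : ℝ × ℝ => p.2 - p.1) hA (measurable_snd.sub measurable_fst).aestronglyMeasurable
      ((measurable_fst.snd).prodMk (measurable_fst.snd)).aemeasurable]
    simp
  have hγIcc : ∀ᵐ x ∂γ, x.2.1 ∈ Icc (0:ℝ) 1 := h2s.mono fun x hx => hx.1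
  have e1 : ∫ p in Prod.fst ⁻¹' s, (p.2 - p.1) ∂(mu1.map Prod.snd)
      = ∫ t in s, (1 - t) ∂((mA1 γ).withDensity (th1 γ)) := by
    have haem : ∀ᵐ p ∂(mu1.map Prod.snd), p.2 = 1 := by
      refine (ae_map_iff measurable_snd.aemeasurable
        (show MeasurableSet {p : ℝ × ℝ | p.2 = 1} from
          measurable_snd (measurableSet_singleton 1))).mpr ?_
      refine ((ae_restrict_mem (measurableSet_Mset.inter measurableSet_S1)).filter_mono
        (withDensity_absolutelyContinuous _ _).ae_le).mono ?_
      exact fun x hx => hx.2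
    calc ∫ p in Prod.fst ⁻¹' s, (p.2 - p.1) ∂(mu1.map Prod.snd)
        = ∫ p in Prod.fst ⁻¹' s, (1 - p.1) ∂(mu1.map Prod.snd) :=
          integral_congr_ae ((ae_restrict_of_ae haem).mono (fun p hp => by
            show p.2 - p.1 = 1 - p.1; rw [hp]))
      _ = ∫ t in s, (1 - t) ∂((mu1.map Prod.snd).map Prod.fst) :=
          (setIntegral_map hs (measurable_const.sub measurable_id).aestronglyMeasurable
            measurable_fst.aemeasurable).symm
      _ = ∫ t in s, (1 - t) ∂((mA1 γ).withDensity (th1 γ)) := by rw [hmu1, F1_fst_map]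
  have e0 : ∫ p in Prod.fst ⁻¹' s, (p.2 - p.1) ∂(mu0.map Prod.snd)
      = - ∫ t in s, t ∂((mA0 γ).withDensity (th0 γ)) := by
    have haem : ∀ᵐ p ∂(mu0.map Prod.snd), p.2 = 0 := by
      refine (ae_map_iff measurable_snd.aemeasurable
        (show MeasurableSet {p : ℝ × ℝ | p.2 = 0} from
          measurable_snd (measurableSet_singleton 0))).mpr ?_
      refine ((ae_restrict_mem (measurableSet_Mset.inter measurableSet_S0)).filter_mono
        (withDensity_absolutelyContinuous _ _).ae_le).mono ?_
      exact fun x hx => hx.2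
    calc ∫ p in Prod.fst ⁻¹' s, (p.2 - p.1) ∂(mu0.map Prod.snd)
        = ∫ p in Prod.fst ⁻¹' s, (- p.1) ∂(mu0.map Prod.snd) :=
          integral_congr_ae ((ae_restrict_of_ae haem).mono (fun p hp => by
            show p.2 - p.1 = -p.1; rw [hp]; ring))
      _ = ∫ t in s, (- t) ∂((mu0.map Prod.snd).map Prod.fst) :=
          (setIntegral_map (f := fun t : ℝ => -t) hs
            (measurable_id.neg).aestronglyMeasurable measurable_fst.aemeasurable).symm
      _ = - ∫ t in s, t ∂((mA0 γ).withDensity (th0 γ)) := by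
          rw [hmu0, F0_fst_map, integral_neg]
  haveI hfinA1 : IsFiniteMeasure ((mA1 γ).withDensity (th1 γ)) := by
    constructor
    rw [withDensity_apply _ MeasurableSet.univ, Measure.restrict_univ]
    calc ∫⁻ v, th1 γ v ∂(mA1 γ) ≤ ∫⁻ _, 1 ∂(mA1 γ) :=
          lintegral_mono (fun v => min_le_left _ _)
      _ < ⊤ := by rw [lintegral_one]; exact measure_lt_top _ _
  haveI hfinA0 : IsFiniteMeasure ((mA0 γ).withDensity (th0 γ)) := by
    constructor
    rw [withDensity_apply _ MeasurableSet.univ, Measure.restrict_univ]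
    calc ∫⁻ v, th0 γ v ∂(mA0 γ) ≤ ∫⁻ _, 1 ∂(mA0 γ) :=
          lintegral_mono (fun v => min_le_left _ _)
      _ < ⊤ := by rw [lintegral_one]; exact measure_lt_top _ _
  have hiccA1 : ∀ᵐ t ∂(((mA1 γ).withDensity (th1 γ)).restrict s), t ∈ Icc (0:ℝ) 1 :=
    ae_restrict_of_ae ((ae_mPart_mem γ (Mset ∩ S1) hγIcc).filter_mono
      (withDensity_absolutelyContinuous _ _).ae_le)
  have hiccA0 : ∀ᵐ t ∂(((mA0 γ).withDensity (th0 γ)).restrict s), t ∈ Icc (0:ℝ) 1 :=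
    ae_restrict_of_ae ((ae_mPart_mem γ (Mset ∩ S0) hγIcc).filter_mono
      (withDensity_absolutelyContinuous _ _).ae_le)
  have hi1 : Integrable (fun t : ℝ => 1 - t) (((mA1 γ).withDensity (th1 γ)).restrict s) := by
    refine Integrable.mono' (integrable_const 1)
      ((measurable_const.sub measurable_id).aestronglyMeasurable) (hiccA1.mono fun t ht => ?_)
    rw [Real.norm_eq_abs, abs_le]; constructor <;> linarith [ht.1, ht.2]
  have hi0 : Integrable (fun t : ℝ => t) (((mA0 γ).withDensity (th0 γ)).restrict s) := by
    refine Integrable.mono' (integrable_const 1)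
      (measurable_id.aestronglyMeasurable) (hiccA0.mono fun t ht => ?_)
    rw [Real.norm_eq_abs, abs_le]; constructor <;> linarith [ht.1, ht.2]
  have hn1 : 0 ≤ᵐ[((mA1 γ).withDensity (th1 γ)).restrict s] (fun t : ℝ => 1 - t) :=
    hiccA1.mono fun t ht => by simp only [Pi.zero_apply]; linarith [ht.2]
  have hn0 : 0 ≤ᵐ[((mA0 γ).withDensity (th0 γ)).restrict s] (fun t : ℝ => t) :=
    hiccA0.mono fun t ht => by simp only [Pi.zero_apply]; linarith [ht.1]
  have hL1 : ENNReal.ofReal (∫ t in s, (1 - t) ∂((mA1 γ).withDensity (th1 γ)))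
      = ∫⁻ t in s, min (u0 γ t) (u1 γ t) ∂(rho γ) := by
    rw [ofReal_integral_eq_lintegral_ofReal hi1 hn1]
    exact lint_A1 γ hs
  have hL0 : ENNReal.ofReal (∫ t in s, t ∂((mA0 γ).withDensity (th0 γ)))
      = ∫⁻ t in s, min (u0 γ t) (u1 γ t) ∂(rho γ) := by
    rw [ofReal_integral_eq_lintegral_ofReal hi0 hn0]
    exact lint_A0 γ hs
  have heq : ∫ t in s, (1 - t) ∂((mA1 γ).withDensity (th1 γ))
      = ∫ t in s, t ∂((mA0 γ).withDensity (th0 γ)) :=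
    (ENNReal.ofReal_eq_ofReal_iff (integral_nonneg_of_ae hn1)
      (integral_nonneg_of_ae hn0)).mp (hL1.trans hL0.symm)
  rw [hsplit, e1, e0, eQ, heq]
  ring

end DCEwork


namespace DCEwork

variable (γ : Measure Om)

lemma measurable_cIF : Measurable (fun x : Om => costInf x.1 x.2) := by
  unfold costInf
  exact Measurable.ite measurableSet_Mset
    (ENNReal.measurable_ofReal.comp ((measurable_fst.fst.sub measurable_snd.fst).abs))
    measurable_const

lemma measurable_cLF : Measurable (fun x : Om => costL1 x.1 x.2) := by
  unfold costL1
  exact ENNReal.measurable_ofReal.comp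
    (((measurable_fst.fst.sub measurable_snd.fst).abs).add
      ((measurable_fst.snd.sub measurable_snd.snd).abs))

lemma Th_nmem {x : Om} (hx : x ∉ Mset) : Th γ x = 0 := by
  have h1 : x ∉ Mset ∩ S1 := fun h => hx h.1
  have h0 : x ∉ Mset ∩ S0 := fun h => hx h.1
  simp [Th, Set.indicator_of_notMem h1, Set.indicator_of_notMem h0]

lemma Th_mem1 {x : Om} (hm : x ∈ Mset) (hy : x.2.2 = 1) : Th γ x = th1 γ (Lf x) := by
  have h1 : x ∈ Mset ∩ S1 := ⟨hm, hy⟩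
  have h0 : x ∉ Mset ∩ S0 := fun h => one_ne_zero (hy.symm.trans h.2 : (1:ℝ) = 0)
  simp [Th, Set.indicator_of_mem h1, Set.indicator_of_notMem h0]

lemma Th_mem0 {x : Om} (hm : x ∈ Mset) (hy : x.2.2 = 0) : Th γ x = th0 γ (Lf x) := by
  have h0 : x ∈ Mset ∩ S0 := ⟨hm, hy⟩
  have h1 : x ∉ Mset ∩ S1 := fun h => one_ne_zero (h.2.symm.trans hy : (1:ℝ) = 0)
  simp [Th, Set.indicator_of_mem h0, Set.indicator_of_notMem h1]

end DCEwork

namespace DCEwork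

variable (γ : Measure Om)

lemma T1_bound [IsFiniteMeasure γ]
    (hicc : ∀ᵐ v ∂(rho γ), v ∈ Icc (0:ℝ) 1)
    (hkey : ∀ᵐ v ∂(rho γ), (hA1 γ v + hB1 γ v) * k1 v = (hA0 γ v + hB0 γ v) * k0 v) :
    ∫⁻ x, (Mset ∩ S1).indicator
      (fun x => (1 - th1 γ (Lf x)) * ENNReal.ofReal (1 - Lf x)) x ∂γ ≤ γ (Msetᶜ ∩ S0) := by
  rw [lintegral_indicator (measurableSet_Mset.inter measurableSet_S1)]
  have hg : Measurable (fun v : ℝ => (1 - th1 γ v) * ENNReal.ofReal (1 - v)) :=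
    (measurable_const.sub (measurable_th1 γ)).mul measurable_k1
  have h1 : ∫⁻ x in Mset ∩ S1, (1 - th1 γ (Lf x)) * ENNReal.ofReal (1 - Lf x) ∂γ
      = ∫⁻ v, (1 - th1 γ v) * ENNReal.ofReal (1 - v) ∂(mA1 γ) :=
    (lintegral_map hg measurable_Lf).symm
  rw [h1, show mA1 γ = (rho γ).withDensity (hA1 γ) from
      (Measure.withDensity_rnDeriv_eq _ _ (mA1_ac γ)).symm,
    lintegral_withDensity_eq_lintegral_mul _
      (show Measurable (hA1 γ) from Measure.measurable_rnDeriv _ _) hg]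
  have hb : ∀ᵐ v ∂(rho γ),
      (hA1 γ * fun v => (1 - th1 γ v) * ENNReal.ofReal (1 - v)) v ≤ hB0 γ v := by
    filter_upwards [hkey, Measure.rnDeriv_lt_top (mA1 γ) (rho γ), hicc] with v hk hlt hv
    simp only [Pi.mul_apply]
    have hu1 : u1 γ v ≠ ⊤ := ENNReal.mul_ne_top ENNReal.ofReal_ne_top hlt.ne
    have e : hA1 γ v * ((1 - th1 γ v) * ENNReal.ofReal (1 - v))
        = (1 - th1 γ v) * u1 γ v := by simp only [u1, k1, hA1]; ring
    rw [e, show (1 - th1 γ v) * u1 γ v = u1 γ v - u0 γ v from one_sub_theta_mul _ _ hu1]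
    have hle : u1 γ v ≤ u0 γ v + k0 v * hB0 γ v := by
      calc u1 γ v ≤ u1 γ v + k1 v * hB1 γ v := le_self_add
        _ = (hA1 γ v + hB1 γ v) * k1 v := by simp only [u1]; ring
        _ = (hA0 γ v + hB0 γ v) * k0 v := hk
        _ = u0 γ v + k0 v * hB0 γ v := by simp only [u0]; ring
    refine (tsub_le_iff_left.mpr hle).trans ?_
    calc k0 v * hB0 γ v ≤ 1 * hB0 γ v :=
          mul_le_mul_left (ENNReal.ofReal_le_one.mpr hv.2) _
      _ = hB0 γ v := one_mul _
  refine (lintegral_mono_ae hb).trans ?_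
  rw [show ∫⁻ v, hB0 γ v ∂(rho γ) = ((rho γ).withDensity (hB0 γ)) Set.univ from by
      rw [withDensity_apply _ MeasurableSet.univ, Measure.restrict_univ],
    show (rho γ).withDensity (hB0 γ) = mB0 γ from Measure.withDensity_rnDeriv_eq _ _ (mB0_ac γ),
    mB0, mPart, Measure.map_apply measurable_Lf MeasurableSet.univ, Set.preimage_univ,
    Measure.restrict_apply_univ]

lemma T0_bound [IsFiniteMeasure γ]
    (hicc : ∀ᵐ v ∂(rho γ), v ∈ Icc (0:ℝ) 1)
    (hkey : ∀ᵐ v ∂(rho γ), (hA1 γ v + hB1 γ v) * k1 v = (hA0 γ v + hB0 γ v) * k0 v) :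
    ∫⁻ x, (Mset ∩ S0).indicator
      (fun x => (1 - th0 γ (Lf x)) * ENNReal.ofReal (Lf x)) x ∂γ ≤ γ (Msetᶜ ∩ S1) := by
  rw [lintegral_indicator (measurableSet_Mset.inter measurableSet_S0)]
  have hg : Measurable (fun v : ℝ => (1 - th0 γ v) * ENNReal.ofReal v) :=
    (measurable_const.sub (measurable_th0 γ)).mul measurable_k0
  have h1 : ∫⁻ x in Mset ∩ S0, (1 - th0 γ (Lf x)) * ENNReal.ofReal (Lf x) ∂γ
      = ∫⁻ v, (1 - th0 γ v) * ENNReal.ofReal v ∂(mA0 γ) :=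
    (lintegral_map hg measurable_Lf).symm
  rw [h1, show mA0 γ = (rho γ).withDensity (hA0 γ) from
      (Measure.withDensity_rnDeriv_eq _ _ (mA0_ac γ)).symm,
    lintegral_withDensity_eq_lintegral_mul _
      (show Measurable (hA0 γ) from Measure.measurable_rnDeriv _ _) hg]
  have hb : ∀ᵐ v ∂(rho γ),
      (hA0 γ * fun v => (1 - th0 γ v) * ENNReal.ofReal v) v ≤ hB1 γ v := by
    filter_upwards [hkey, Measure.rnDeriv_lt_top (mA0 γ) (rho γ), hicc] with v hk hlt hv
    simp only [Pi.mul_apply]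
    have hu0 : u0 γ v ≠ ⊤ := ENNReal.mul_ne_top ENNReal.ofReal_ne_top hlt.ne
    have e : hA0 γ v * ((1 - th0 γ v) * ENNReal.ofReal v)
        = (1 - th0 γ v) * u0 γ v := by simp only [u0, k0, hA0]; ring
    rw [e, show (1 - th0 γ v) * u0 γ v = u0 γ v - u1 γ v from one_sub_theta_mul _ _ hu0]
    have hle : u0 γ v ≤ u1 γ v + k1 v * hB1 γ v := by
      calc u0 γ v ≤ u0 γ v + k0 v * hB0 γ v := le_self_add
        _ = (hA0 γ v + hB0 γ v) * k0 v := by simp only [u0]; ring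
        _ = (hA1 γ v + hB1 γ v) * k1 v := hk.symm
        _ = u1 γ v + k1 v * hB1 γ v := by simp only [u1]; ring
    refine (tsub_le_iff_left.mpr hle).trans ?_
    calc k1 v * hB1 γ v ≤ 1 * hB1 γ v :=
          mul_le_mul_left (ENNReal.ofReal_le_one.mpr (by linarith [hv.1])) _
      _ = hB1 γ v := one_mul _
  refine (lintegral_mono_ae hb).trans ?_
  rw [show ∫⁻ v, hB1 γ v ∂(rho γ) = ((rho γ).withDensity (hB1 γ)) Set.univ from by
      rw [withDensity_apply _ MeasurableSet.univ, Measure.restrict_univ],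
    show (rho γ).withDensity (hB1 γ) = mB1 γ from Measure.withDensity_rnDeriv_eq _ _ (mB1_ac γ),
    mB1, mPart, Measure.map_apply measurable_Lf MeasurableSet.univ, Set.preimage_univ,
    Measure.restrict_apply_univ]

end DCEwork

namespace DCEwork

variable (γ : Measure Om)

lemma term1_pw (x : Om) : Th γ x * costInf x.1 x.2 ≤ costL1 x.1 x.2 := by
  by_cases hm : x ∈ Mset
  · have hci : costInf x.1 x.2 = ENNReal.ofReal |x.1.1 - x.2.1| := if_pos hm
    calc Th γ x * costInf x.1 x.2 ≤ 1 * costInf x.1 x.2 :=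
          mul_le_mul_left (Th_le_one γ x) _
      _ = costInf x.1 x.2 := one_mul _
      _ = ENNReal.ofReal |x.1.1 - x.2.1| := hci
      _ ≤ costL1 x.1 x.2 :=
          ENNReal.ofReal_le_ofReal (le_add_of_nonneg_right (abs_nonneg _))
  · rw [Th_nmem γ hm, zero_mul]
    exact zero_le

lemma two_cL_le (a : ℝ≥0∞) : a ≤ 2 * a := by
  calc a = 1 * a := (one_mul a).symm
    _ ≤ 2 * a := mul_le_mul_left one_le_two a

lemma term2_ae
    (h1s : ∀ᵐ x ∂γ, x.1.1 ∈ Icc (0:ℝ) 1 ∧ (x.1.2 = 0 ∨ x.1.2 = 1))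
    (h2s : ∀ᵐ x ∂γ, x.2.1 ∈ Icc (0:ℝ) 1 ∧ (x.2.2 = 0 ∨ x.2.2 = 1)) :
    ∀ᵐ x ∂γ, (1 - Th γ x) * costInf (gmap x).1 (gmap x).2 ≤
      2 * costL1 x.1 x.2 +
      ((Mset ∩ S1).indicator (fun x => (1 - th1 γ (Lf x)) * ENNReal.ofReal (1 - Lf x)) x +
       (Mset ∩ S0).indicator (fun x => (1 - th0 γ (Lf x)) * ENNReal.ofReal (Lf x)) x) := by
  filter_upwards [h1s, h2s] with x hx1 hx2
  have hrfl : costInf (gmap x).1 (gmap x).2 = ENNReal.ofReal |x.1.1 - x.1.2| := if_pos rfl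
  have hcL : costL1 x.1 x.2 = ENNReal.ofReal (|x.1.1 - x.2.1| + |x.1.2 - x.2.2|) := rfl
  by_cases hm : x ∈ Mset
  · have hyy : x.1.2 = x.2.2 := hm
    rcases hx2.2 with hy' | hy'
    · -- y' = 0
      have hTh : Th γ x = th0 γ (Lf x) := Th_mem0 γ hm hy'
      have hmem : x ∈ Mset ∩ S0 := ⟨hm, hy'⟩
      have hnmem : x ∉ Mset ∩ S1 := fun h => one_ne_zero (h.2.symm.trans hy' : (1:ℝ) = 0)
      have htri : |x.1.1 - x.1.2| ≤ |x.1.1 - x.2.1| + x.2.1 := by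
        have h0 : x.1.2 = 0 := hyy.trans hy'
        rw [h0]
        calc |x.1.1 - 0| = |(x.1.1 - x.2.1) + (x.2.1 - 0)| := by ring_nf
          _ ≤ |x.1.1 - x.2.1| + |x.2.1 - 0| := abs_add_le _ _
          _ = |x.1.1 - x.2.1| + x.2.1 := by rw [sub_zero, abs_of_nonneg hx2.1.1]
      have step1 : ENNReal.ofReal |x.1.1 - x.1.2| ≤
          ENNReal.ofReal |x.1.1 - x.2.1| + ENNReal.ofReal x.2.1 := by
        rw [← ENNReal.ofReal_add (abs_nonneg _) hx2.1.1]
        exact ENNReal.ofReal_le_ofReal htri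
      calc (1 - Th γ x) * costInf (gmap x).1 (gmap x).2
          = (1 - th0 γ (Lf x)) * ENNReal.ofReal |x.1.1 - x.1.2| := by rw [hrfl, hTh]
        _ ≤ (1 - th0 γ (Lf x)) * (ENNReal.ofReal |x.1.1 - x.2.1| + ENNReal.ofReal x.2.1) :=
            mul_le_mul_right step1 _
        _ = (1 - th0 γ (Lf x)) * ENNReal.ofReal |x.1.1 - x.2.1| +
            (1 - th0 γ (Lf x)) * ENNReal.ofReal x.2.1 := mul_add _ _ _
        _ ≤ costL1 x.1 x.2 +
            ((Mset ∩ S1).indicator (fun x => (1 - th1 γ (Lf x)) * ENNReal.ofReal (1 - Lf x)) x +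
             (Mset ∩ S0).indicator (fun x => (1 - th0 γ (Lf x)) * ENNReal.ofReal (Lf x)) x) := by
            refine add_le_add ?_ ?_
            · calc (1 - th0 γ (Lf x)) * ENNReal.ofReal |x.1.1 - x.2.1|
                  ≤ 1 * ENNReal.ofReal |x.1.1 - x.2.1| := mul_le_mul_left tsub_le_self _
                _ = ENNReal.ofReal |x.1.1 - x.2.1| := one_mul _
                _ ≤ costL1 x.1 x.2 :=
                    ENNReal.ofReal_le_ofReal (le_add_of_nonneg_right (abs_nonneg _))
            · rw [Set.indicator_of_notMem hnmem, Set.indicator_of_mem hmem, zero_add]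
              exact le_rfl
        _ ≤ 2 * costL1 x.1 x.2 + _ := add_le_add_left (two_cL_le _) _
    · -- y' = 1
      have hTh : Th γ x = th1 γ (Lf x) := Th_mem1 γ hm hy'
      have hmem : x ∈ Mset ∩ S1 := ⟨hm, hy'⟩
      have hnmem : x ∉ Mset ∩ S0 := fun h => one_ne_zero (hy'.symm.trans h.2 : (1:ℝ) = 0)
      have htri : |x.1.1 - x.1.2| ≤ |x.1.1 - x.2.1| + (1 - x.2.1) := by
        have h1 : x.1.2 = 1 := hyy.trans hy'
        rw [h1]
        calc |x.1.1 - 1| = |(x.1.1 - x.2.1) + (x.2.1 - 1)| := by ring_nf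
          _ ≤ |x.1.1 - x.2.1| + |x.2.1 - 1| := abs_add_le _ _
          _ = |x.1.1 - x.2.1| + (1 - x.2.1) := by
              rw [show |x.2.1 - 1| = 1 - x.2.1 from by
                rw [abs_sub_comm]; exact abs_of_nonneg (by linarith [hx2.1.2])]
      have step1 : ENNReal.ofReal |x.1.1 - x.1.2| ≤
          ENNReal.ofReal |x.1.1 - x.2.1| + ENNReal.ofReal (1 - x.2.1) := by
        rw [← ENNReal.ofReal_add (abs_nonneg _) (by linarith [hx2.1.2])]
        exact ENNReal.ofReal_le_ofReal htri
      calc (1 - Th γ x) * costInf (gmap x).1 (gmap x).2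
          = (1 - th1 γ (Lf x)) * ENNReal.ofReal |x.1.1 - x.1.2| := by rw [hrfl, hTh]
        _ ≤ (1 - th1 γ (Lf x)) * (ENNReal.ofReal |x.1.1 - x.2.1| + ENNReal.ofReal (1 - x.2.1)) :=
            mul_le_mul_right step1 _
        _ = (1 - th1 γ (Lf x)) * ENNReal.ofReal |x.1.1 - x.2.1| +
            (1 - th1 γ (Lf x)) * ENNReal.ofReal (1 - x.2.1) := mul_add _ _ _
        _ ≤ costL1 x.1 x.2 +
            ((Mset ∩ S1).indicator (fun x => (1 - th1 γ (Lf x)) * ENNReal.ofReal (1 - Lf x)) x +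
             (Mset ∩ S0).indicator (fun x => (1 - th0 γ (Lf x)) * ENNReal.ofReal (Lf x)) x) := by
            refine add_le_add ?_ ?_
            · calc (1 - th1 γ (Lf x)) * ENNReal.ofReal |x.1.1 - x.2.1|
                  ≤ 1 * ENNReal.ofReal |x.1.1 - x.2.1| := mul_le_mul_left tsub_le_self _
                _ = ENNReal.ofReal |x.1.1 - x.2.1| := one_mul _
                _ ≤ costL1 x.1 x.2 :=
                    ENNReal.ofReal_le_ofReal (le_add_of_nonneg_right (abs_nonneg _))
            · rw [Set.indicator_of_mem hmem, Set.indicator_of_notMem hnmem, add_zero]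
              exact le_rfl
        _ ≤ 2 * costL1 x.1 x.2 + _ := add_le_add_left (two_cL_le _) _
  · -- mismatched
    have h1r : |x.1.1 - x.1.2| ≤ |x.1.1 - x.2.1| + |x.1.2 - x.2.2| := by
      rcases hx1.2 with hy | hy <;> rcases hx2.2 with hy' | hy'
      · exact absurd (hy.trans hy'.symm) hm
      · have hb : |x.1.1 - x.1.2| ≤ 1 := by
          rw [hy, abs_le]; constructor <;> linarith [hx1.1.1, hx1.1.2]
        have hc : |x.1.2 - x.2.2| = 1 := by rw [hy, hy']; norm_num
        linarith [abs_nonneg (x.1.1 - x.2.1)]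
      · have hb : |x.1.1 - x.1.2| ≤ 1 := by
          rw [hy, abs_le]; constructor <;> linarith [hx1.1.1, hx1.1.2]
        have hc : |x.1.2 - x.2.2| = 1 := by rw [hy, hy']; norm_num
        linarith [abs_nonneg (x.1.1 - x.2.1)]
      · exact absurd (hy.trans hy'.symm) hm
    calc (1 - Th γ x) * costInf (gmap x).1 (gmap x).2
        = ENNReal.ofReal |x.1.1 - x.1.2| := by rw [hrfl, Th_nmem γ hm, tsub_zero, one_mul]
      _ ≤ costL1 x.1 x.2 := ENNReal.ofReal_le_ofReal h1r
      _ ≤ 2 * costL1 x.1 x.2 := two_cL_le _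
      _ ≤ _ := le_self_add

end DCEwork

namespace DCEwork

variable (γ : Measure Om)

lemma U_bound (h1s : ∀ᵐ x ∂γ, x.1.1 ∈ Icc (0:ℝ) 1 ∧ (x.1.2 = 0 ∨ x.1.2 = 1)) :
    γ (Msetᶜ ∩ S0) + γ (Msetᶜ ∩ S1) ≤ ∫⁻ x, costL1 x.1 x.2 ∂γ := by
  have hU : MeasurableSet ((Msetᶜ ∩ S0) ∪ (Msetᶜ ∩ S1)) :=
    (measurableSet_Mset.compl.inter measurableSet_S0).union
      (measurableSet_Mset.compl.inter measurableSet_S1)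
  have hdisj : Disjoint (Msetᶜ ∩ S0) (Msetᶜ ∩ S1) := by
    refine Disjoint.mono Set.inter_subset_right Set.inter_subset_right ?_
    rw [Set.disjoint_left]
    rintro x h0 h1
    exact one_ne_zero ((h1.symm.trans h0 : (1:ℝ) = 0))
  rw [← measure_union hdisj (measurableSet_Mset.compl.inter measurableSet_S1),
    ← lintegral_indicator_one hU]
  refine lintegral_mono_ae ?_
  filter_upwards [h1s] with x hx1
  by_cases hx : x ∈ (Msetᶜ ∩ S0) ∪ (Msetᶜ ∩ S1)
  · rw [Set.indicator_of_mem hx]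
    have h1r : (1:ℝ) ≤ |x.1.1 - x.2.1| + |x.1.2 - x.2.2| := by
      have habs : |x.1.2 - x.2.2| = 1 := by
        rcases hx with ⟨hm, hy'⟩ | ⟨hm, hy'⟩ <;> rcases hx1.2 with hy | hy <;>
          first
          | (exact absurd (hy.trans (show (0:ℝ) = x.2.2 from hy'.symm)) hm)
          | (exact absurd (hy.trans (show (1:ℝ) = x.2.2 from hy'.symm)) hm)
          | (rw [hy, hy']; norm_num)
      linarith [abs_nonneg (x.1.1 - x.2.1)]
    calc (1 : ℝ≥0∞) = ENNReal.ofReal 1 := ENNReal.ofReal_one.symm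
      _ ≤ costL1 x.1 x.2 := ENNReal.ofReal_le_ofReal h1r
  · rw [Set.indicator_of_notMem hx]
    exact zero_le

lemma cost_bound [IsProbabilityMeasure γ]
    (h1s : ∀ᵐ x ∂γ, x.1.1 ∈ Icc (0:ℝ) 1 ∧ (x.1.2 = 0 ∨ x.1.2 = 1))
    (h2s : ∀ᵐ x ∂γ, x.2.1 ∈ Icc (0:ℝ) 1 ∧ (x.2.2 = 0 ∨ x.2.2 = 1))
    (hkey : ∀ᵐ v ∂(rho γ), (hA1 γ v + hB1 γ v) * k1 v = (hA0 γ v + hB0 γ v) * k0 v) :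
    ∫⁻ x, costInf x.1 x.2 ∂(gam2 γ) ≤ 4 * ∫⁻ x, costL1 x.1 x.2 ∂γ := by
  have hiccρ : ∀ᵐ v ∂(rho γ), v ∈ Icc (0:ℝ) 1 :=
    ae_rho_mem γ (h2s.mono fun x hx => hx.1)
  rw [gam2, lintegral_add_measure,
    lintegral_map (measurable_cIF) measurable_gmap,
    lintegral_withDensity_eq_lintegral_mul _ (measurable_Th γ) measurable_cIF,
    lintegral_withDensity_eq_lintegral_mul _
      (show Measurable (1 - Th γ) from measurable_const.sub (measurable_Th γ))
      (show Measurable (fun a : Om => costInf (gmap a).1 (gmap a).2) from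
        measurable_cIF.comp measurable_gmap)]
  have hterm1 : ∫⁻ x, (Th γ * fun x : Om => costInf x.1 x.2) x ∂γ
      ≤ ∫⁻ x, costL1 x.1 x.2 ∂γ := by
    refine lintegral_mono (fun x => ?_)
    simp only [Pi.mul_apply]
    exact term1_pw γ x
  have hterm2 : ∫⁻ x, ((1 - Th γ) * fun a : Om => costInf (gmap a).1 (gmap a).2) x ∂γ
      ≤ 2 * ∫⁻ x, costL1 x.1 x.2 ∂γ + (γ (Msetᶜ ∩ S0) + γ (Msetᶜ ∩ S1)) := by
    have step : ∫⁻ x, ((1 - Th γ) * fun a : Om => costInf (gmap a).1 (gmap a).2) x ∂γ ≤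
        ∫⁻ x, (2 * costL1 x.1 x.2 +
          ((Mset ∩ S1).indicator (fun x => (1 - th1 γ (Lf x)) * ENNReal.ofReal (1 - Lf x)) x +
           (Mset ∩ S0).indicator (fun x => (1 - th0 γ (Lf x)) * ENNReal.ofReal (Lf x)) x)) ∂γ := by
      refine lintegral_mono_ae ((term2_ae γ h1s h2s).mono (fun x hx => ?_))
      simpa only [Pi.mul_apply, Pi.sub_apply, Pi.one_apply] using hx
    refine step.trans ?_
    have hmind1 : Measurable ((Mset ∩ S1).indicator
        (fun x : Om => (1 - th1 γ (Lf x)) * ENNReal.ofReal (1 - Lf x))) :=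
      Measurable.indicator ((((measurable_th1 γ).comp measurable_Lf).const_sub 1).mul
        (measurable_k1.comp measurable_Lf)) (measurableSet_Mset.inter measurableSet_S1)
    rw [lintegral_add_left (measurable_cLF.const_mul 2),
      lintegral_add_left hmind1, lintegral_const_mul 2 measurable_cLF]
    exact add_le_add_right (add_le_add (T1_bound γ hiccρ hkey) (T0_bound γ hiccρ hkey)) _
  calc ∫⁻ x, (Th γ * fun x : Om => costInf x.1 x.2) x ∂γ +
      ∫⁻ x, ((1 - Th γ) * fun a : Om => costInf (gmap a).1 (gmap a).2) x ∂γ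
      ≤ ∫⁻ x, costL1 x.1 x.2 ∂γ +
        (2 * ∫⁻ x, costL1 x.1 x.2 ∂γ + (γ (Msetᶜ ∩ S0) + γ (Msetᶜ ∩ S1))) :=
        add_le_add hterm1 hterm2
    _ ≤ ∫⁻ x, costL1 x.1 x.2 ∂γ +
        (2 * ∫⁻ x, costL1 x.1 x.2 ∂γ + ∫⁻ x, costL1 x.1 x.2 ∂γ) :=
        add_le_add_right (add_le_add_right (U_bound γ h1s) _) _
    _ = 4 * ∫⁻ x, costL1 x.1 x.2 ∂γ := by ring

end DCEwork


namespace DCEwork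

lemma costL1_le_costInf (p q : ℝ × ℝ) : costL1 p q ≤ costInf p q := by
  unfold costL1 costInf
  by_cases h : p.2 = q.2
  · rw [if_pos h, h, sub_self, abs_zero, add_zero]
  · rw [if_neg h]; exact le_top

lemma part1 (D : Measure (ℝ × ℝ)) : dCEl1 D ≤ dCE D := by
  refine le_iInf₂ fun D' hD' => ?_
  refine (iInf₂_le D' hD').trans ?_
  refine le_iInf₂ fun γ hγ => ?_
  exact (iInf₂_le γ hγ).trans (lintegral_mono fun x => costL1_le_costInf _ _)

lemma key_ineq (D : Measure (ℝ × ℝ)) [IsProbabilityMeasure D] (hD : SupportedOn D)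
    (D' : Measure (ℝ × ℝ)) (hD' : PerfectlyCalibrated D') (γ : Measure Om)
    (hfst : γ.map Prod.fst = D) (hsnd : γ.map Prod.snd = D') :
    dCE D ≤ 4 * ∫⁻ x, costL1 x.1 x.2 ∂γ := by
  obtain ⟨hprob', hsupp', hcal'⟩ := hD'
  haveI : IsProbabilityMeasure D' := hprob'
  haveI hγp : IsProbabilityMeasure γ := by
    constructor
    have h := congrArg (fun μ : Measure (ℝ × ℝ) => μ Set.univ) hfst
    rw [Measure.map_apply measurable_fst MeasurableSet.univ, Set.preimage_univ] at h
    rw [h]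
    exact measure_univ
  have h1s := ae_fst_supp γ hfst hD
  have h2s := ae_snd_supp γ hsnd hsupp'
  have hmeq := calib_nu γ hsnd hsupp' hcal'
  have hkey := key_ae γ (ae_mPart_mem γ S1 (h2s.mono fun x hx => hx.1)) hmeq
  have hcalD2 : PerfectlyCalibrated (D2 γ) := by
    refine ⟨?_, D2_supp γ h1s h2s, D2_cal γ h1s h2s⟩
    constructor
    rw [D2_univ γ]
    exact measure_univ
  have hmemγ2 : (gam2 γ).map Prod.fst = D ∧ (gam2 γ).map Prod.snd = D2 γ :=
    ⟨gam2_fst γ hfst, rfl⟩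
  calc dCE D ≤ W1 costInf D (D2 γ) := iInf₂_le (D2 γ) hcalD2
    _ ≤ ∫⁻ x, costInf x.1 x.2 ∂(gam2 γ) := iInf₂_le (gam2 γ) hmemγ2
    _ ≤ 4 * ∫⁻ x, costL1 x.1 x.2 ∂γ := cost_bound γ h1s h2s hkey

lemma part2 (D : Measure (ℝ × ℝ)) [IsProbabilityMeasure D] (hD : SupportedOn D) :
    ENNReal.ofReal (1/4) * dCE D ≤ dCEl1 D := by
  have h4 : ENNReal.ofReal (1/4 : ℝ) * (4 : ℝ≥0∞) = 1 := by
    rw [show ((1:ℝ)/4) = (4:ℝ)⁻¹ by norm_num,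
      ENNReal.ofReal_inv_of_pos (by norm_num : (0:ℝ) < 4)]
    rw [show ENNReal.ofReal (4:ℝ) = (4:ℝ≥0∞) from by norm_num]
    exact ENNReal.inv_mul_cancel (by norm_num) (by norm_num)
  refine le_iInf₂ fun D' hD' => le_iInf₂ fun γ hγ => ?_
  have h := key_ineq D hD D' hD' γ hγ.1 hγ.2
  calc ENNReal.ofReal (1/4) * dCE D
      ≤ ENNReal.ofReal (1/4) * (4 * ∫⁻ x, costL1 x.1 x.2 ∂γ) := mul_le_mul_right h _
    _ = ∫⁻ x, costL1 x.1 x.2 ∂γ := by rw [← mul_assoc, h4, one_mul]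

end DCEwork


/-- `dCE_{ℓ₁}(D) ≤ dCE(D)` for every `D`, and there is a universal
constant `c > 0` such that `c·dCE(D) ≤ dCE_{ℓ₁}(D)`. -/
theorem dCEl1_equiv_dCE :
    (∀ (D : Measure (ℝ × ℝ)) [IsProbabilityMeasure D], SupportedOn D → dCEl1 D ≤ dCE D) ∧
    ∃ c : ℝ, 0 < c ∧
      ∀ (D : Measure (ℝ × ℝ)) [IsProbabilityMeasure D], SupportedOn D →
        ENNReal.ofReal c * dCE D ≤ dCEl1 D := by
  constructor
  · intro D _ _
    exact DCEwork.part1 D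
  · exact ⟨1/4, by norm_num, fun D _ hD => DCEwork.part2 D hD⟩
end
end

section
/- Let d: [0,1]² → ℝ≥0 ∪ {∞} be any metric such that for some c > 0 and all ε > 0 and all u, v ∈ [ε, 1−ε], d(u,v) ≤ |u−v|·ε^{−c}. Then there is a constant C (depending only on c) such that for every probability distribution D over [0,1]×{0,1}, wCE_d(D)^q ≤ C·wCE(D), where q := max(c+1, 2). -/
open MeasureTheory Real Set
open scoped ENNReal

noncomputable section

/-- The weak calibration error w.r.t. an extended-real-valued metric `d` on `[0,1]`:
`wCE_d(D) = sup_w E[(f - y) w(f)]` over `d`-`1`-Lipschitz `w : [0,1] → [-1,1]`. -/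
def wCEdE (d : ℝ → ℝ → ℝ≥0∞) (D : Measure (ℝ × ℝ)) : ℝ :=
  ⨆ w : {w : ℝ → ℝ // (∀ u ∈ Icc (0 : ℝ) 1, w u ∈ Icc (-1 : ℝ) 1) ∧
      ∀ u ∈ Icc (0 : ℝ) 1, ∀ v ∈ Icc (0 : ℝ) 1, ENNReal.ofReal |w u - w v| ≤ d u v},
    ∫ p, (p.1 - p.2) * w.1 p.1 ∂D

/-- The weak calibration error for the standard metric `|u - v|` on `[0,1]`. -/
def wCE (D : Measure (ℝ × ℝ)) : ℝ :=
  wCEdE (fun u v => ENNReal.ofReal |u - v|) D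

section Helpers

variable {D : Measure (ℝ × ℝ)} [IsProbabilityMeasure D]

lemma integral_le_one (hD : SupportedOn D) {w : ℝ → ℝ}
    (hw : ∀ u ∈ Icc (0 : ℝ) 1, w u ∈ Icc (-1 : ℝ) 1) :
    ∫ p, (p.1 - p.2) * w p.1 ∂D ≤ 1 := by
  by_cases hint : Integrable (fun p : ℝ × ℝ => (p.1 - p.2) * w p.1) D
  · have step : ∫ p, (p.1 - p.2) * w p.1 ∂D ≤ ∫ _p, (1:ℝ) ∂D := by
      refine integral_mono_ae hint (integrable_const 1) ?_
      filter_upwards [hD] with p hp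
      have h2 : |w p.1| ≤ 1 := abs_le.2 ⟨(hw _ hp.1).1, (hw _ hp.1).2⟩
      have h1 : |p.1 - p.2| ≤ 1 := by
        rcases hp.2 with h | h <;> rw [h] <;> rw [abs_le] <;>
          constructor <;> linarith [hp.1.1, hp.1.2]
      calc (p.1 - p.2) * w p.1 ≤ |(p.1 - p.2) * w p.1| := le_abs_self _
        _ = |p.1 - p.2| * |w p.1| := abs_mul _ _
        _ ≤ 1 * 1 := mul_le_mul h1 h2 (abs_nonneg _) zero_le_one
        _ = 1 := one_mul 1
    simpa using step
  · rw [integral_undef hint]; norm_num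

lemma bddAbove_wCE (hD : SupportedOn D) (d : ℝ → ℝ → ℝ≥0∞) :
    BddAbove (Set.range fun w : {w : ℝ → ℝ // (∀ u ∈ Icc (0 : ℝ) 1, w u ∈ Icc (-1 : ℝ) 1) ∧
      ∀ u ∈ Icc (0 : ℝ) 1, ∀ v ∈ Icc (0 : ℝ) 1, ENNReal.ofReal |w u - w v| ≤ d u v} =>
      ∫ p, (p.1 - p.2) * w.1 p.1 ∂D) := by
  refine ⟨1, ?_⟩
  rintro x ⟨w, rfl⟩
  exact integral_le_one hD w.2.1

lemma le_wCEdE (hD : SupportedOn D) (d : ℝ → ℝ → ℝ≥0∞) (w : ℝ → ℝ)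
    (hw1 : ∀ u ∈ Icc (0 : ℝ) 1, w u ∈ Icc (-1 : ℝ) 1)
    (hw2 : ∀ u ∈ Icc (0 : ℝ) 1, ∀ v ∈ Icc (0 : ℝ) 1, ENNReal.ofReal |w u - w v| ≤ d u v) :
    ∫ p, (p.1 - p.2) * w p.1 ∂D ≤ wCEdE d D :=
  le_ciSup (bddAbove_wCE hD d) ⟨w, hw1, hw2⟩

lemma wCEdE_nonneg (hD : SupportedOn D) (d : ℝ → ℝ → ℝ≥0∞) : 0 ≤ wCEdE d D := by
  have := le_wCEdE hD d (fun _ => 0) (by intro u _; simp) (by intro u _ v _; simp)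
  simpa using this

omit [IsProbabilityMeasure D] in
lemma wCEdE_le (d : ℝ → ℝ → ℝ≥0∞) {B : ℝ}
    (hB : ∀ w : ℝ → ℝ, (∀ u ∈ Icc (0 : ℝ) 1, w u ∈ Icc (-1 : ℝ) 1) →
      (∀ u ∈ Icc (0 : ℝ) 1, ∀ v ∈ Icc (0 : ℝ) 1, ENNReal.ofReal |w u - w v| ≤ d u v) →
      ∫ p, (p.1 - p.2) * w p.1 ∂D ≤ B) :
    wCEdE d D ≤ B := by
  have : Nonempty {w : ℝ → ℝ // (∀ u ∈ Icc (0 : ℝ) 1, w u ∈ Icc (-1 : ℝ) 1) ∧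
      ∀ u ∈ Icc (0 : ℝ) 1, ∀ v ∈ Icc (0 : ℝ) 1, ENNReal.ofReal |w u - w v| ≤ d u v} :=
    ⟨⟨fun _ => 0, by intro u _; simp, by intro u _ v _; simp⟩⟩
  exact ciSup_le fun w => hB w.1 w.2.1 w.2.2

lemma wCE_le_one (hD : SupportedOn D) : wCE D ≤ 1 :=
  wCEdE_le _ fun w hw1 _ => integral_le_one hD hw1

end Helpers

section Tails

variable {D : Measure (ℝ × ℝ)} [IsProbabilityMeasure D]

lemma integrable_of_meas_bdd {g : ℝ × ℝ → ℝ} (hg : Measurable g) (C : ℝ)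
    (h : ∀ᵐ p ∂D, |g p| ≤ C) : Integrable g D := by
  refine (integrable_const C).mono' hg.aestronglyMeasurable ?_
  simpa [Real.norm_eq_abs] using h

lemma abs_fy_le_one {p : ℝ × ℝ} (h1 : p.1 ∈ Icc (0:ℝ) 1) (h2 : p.2 = 0 ∨ p.2 = 1) :
    |p.1 - p.2| ≤ 1 := by
  rcases h2 with h | h <;> rw [h] <;> rw [abs_le] <;>
    constructor <;> linarith [h1.1, h1.2]

lemma tail_low (hD : SupportedOn D) {ε : ℝ} (hε : 0 < ε) (hε2 : ε ≤ 1/2) :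
    ∫ p, |p.1 - p.2| * (if p.1 ≤ ε then (1:ℝ) else 0) ∂D ≤ wCE D / ε + 5 * ε := by
  set w1 : ℝ → ℝ := fun u => -(max (2*ε - u) 0) with hw1def
  have hcand1 : ∀ u ∈ Icc (0:ℝ) 1, w1 u ∈ Icc (-1:ℝ) 1 := by
    intro u hu
    simp only [Set.mem_Icc] at hu ⊢
    have h0 : 0 ≤ max (2*ε - u) 0 := le_max_right _ _
    have h1 : max (2*ε - u) 0 ≤ 1 := max_le (by linarith [hu.1]) (by linarith)
    constructor <;> simp only [hw1def] <;> linarith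
  have hcand2 : ∀ u ∈ Icc (0:ℝ) 1, ∀ v ∈ Icc (0:ℝ) 1,
      ENNReal.ofReal |w1 u - w1 v| ≤ ENNReal.ofReal |u - v| := by
    intro u _ v _
    refine ENNReal.ofReal_le_ofReal ?_
    have heq : w1 u - w1 v = max (2*ε - v) 0 - max (2*ε - u) 0 := by
      simp only [hw1def]; ring
    rw [heq]
    calc |max (2*ε - v) 0 - max (2*ε - u) 0| ≤ |(2*ε - v) - (2*ε - u)| :=
          abs_max_sub_max_le_abs _ _ _
      _ = |u - v| := by ring_nf
  have hw1meas : Measurable w1 :=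
    ((measurable_const.sub measurable_id).max measurable_const).neg
  have hgmeas : Measurable (fun p : ℝ × ℝ => |p.1 - p.2| * (if p.1 ≤ ε then (1:ℝ) else 0)) :=
    ((measurable_fst.sub measurable_snd).abs).mul
      (Measurable.ite (measurableSet_le measurable_fst measurable_const)
        measurable_const measurable_const)
  have hgint : Integrable (fun p : ℝ × ℝ => |p.1 - p.2| * (if p.1 ≤ ε then (1:ℝ) else 0)) D := by
    refine integrable_of_meas_bdd hgmeas 1 ?_
    filter_upwards [hD] with p hp
    have h := abs_fy_le_one hp.1 hp.2
    rw [abs_mul]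
    split_ifs
    · simpa [abs_abs] using h
    · simp
  have hw1int : Integrable (fun p : ℝ × ℝ => (p.1 - p.2) * w1 p.1) D := by
    refine integrable_of_meas_bdd ((measurable_fst.sub measurable_snd).mul
      (hw1meas.comp measurable_fst)) 1 ?_
    filter_upwards [hD] with p hp
    have h1 := abs_fy_le_one hp.1 hp.2
    have h2 : |w1 p.1| ≤ 1 := abs_le.2 ⟨(hcand1 _ hp.1).1, (hcand1 _ hp.1).2⟩
    calc |(p.1 - p.2) * w1 p.1| = |p.1 - p.2| * |w1 p.1| := abs_mul _ _
      _ ≤ 1 * 1 := mul_le_mul h1 h2 (abs_nonneg _) zero_le_one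
      _ = 1 := one_mul 1
  have hpt : ∀ᵐ p ∂D, ε * (|p.1 - p.2| * (if p.1 ≤ ε then (1:ℝ) else 0)) ≤
      (p.1 - p.2) * w1 p.1 + 5 * ε ^ 2 := by
    filter_upwards [hD] with p hp
    obtain ⟨⟨hf0, hf1⟩, hy⟩ := hp
    simp only [hw1def]
    have habs0 : |p.1 - (0:ℝ)| = p.1 := by rw [sub_zero, abs_of_nonneg hf0]
    have habs1 : |p.1 - (1:ℝ)| = 1 - p.1 := by
      rw [abs_of_nonpos (by linarith)]; ring
    rcases le_or_gt (2*ε - p.1) 0 with hm | hm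
    · rw [max_eq_right hm]
      rcases hy with hy | hy <;> rw [hy] <;> split_ifs with hf <;>
        simp only [habs0, habs1] <;> nlinarith
    · rw [max_eq_left hm.le]
      rcases hy with hy | hy <;> rw [hy] <;> split_ifs with hf <;>
        simp only [habs0, habs1] <;>
        nlinarith [sq_nonneg (p.1 - ε),
          mul_nonneg (sub_nonneg.2 hf1) hm.le]
  have hineq : ∫ p, ε * (|p.1 - p.2| * (if p.1 ≤ ε then (1:ℝ) else 0)) ∂D ≤
      ∫ p, ((p.1 - p.2) * w1 p.1 + 5 * ε ^ 2) ∂D :=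
    integral_mono_ae (hgint.const_mul ε)
      (by exact hw1int.add (integrable_const (5*ε^2))) hpt
  rw [integral_const_mul, integral_add hw1int (integrable_const _), integral_const] at hineq
  simp only [measure_univ, probReal_univ, smul_eq_mul, one_mul] at hineq
  have hle : ∫ p, (p.1 - p.2) * w1 p.1 ∂D ≤ wCE D :=
    le_wCEdE hD _ w1 hcand1 hcand2
  have hfin : ε * (wCE D / ε + 5 * ε) = wCE D + 5 * ε^2 := by field_simp
  have h2 : ε * ∫ p, |p.1 - p.2| * (if p.1 ≤ ε then (1:ℝ) else 0) ∂D ≤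
      ε * (wCE D / ε + 5 * ε) := by rw [hfin]; linarith
  exact le_of_mul_le_mul_left h2 hε

lemma tail_high (hD : SupportedOn D) {ε : ℝ} (hε : 0 < ε) (hε2 : ε ≤ 1/2) :
    ∫ p, |p.1 - p.2| * (if 1 - ε ≤ p.1 then (1:ℝ) else 0) ∂D ≤ wCE D / ε + 5 * ε := by
  set w2 : ℝ → ℝ := fun u => max (u - (1 - 2*ε)) 0 with hw2def
  have hcand1 : ∀ u ∈ Icc (0:ℝ) 1, w2 u ∈ Icc (-1:ℝ) 1 := by
    intro u hu
    simp only [Set.mem_Icc] at hu ⊢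
    have h0 : 0 ≤ max (u - (1 - 2*ε)) 0 := le_max_right _ _
    have h1 : max (u - (1 - 2*ε)) 0 ≤ 1 := max_le (by linarith [hu.2]) (by linarith)
    constructor <;> simp only [hw2def] <;> linarith
  have hcand2 : ∀ u ∈ Icc (0:ℝ) 1, ∀ v ∈ Icc (0:ℝ) 1,
      ENNReal.ofReal |w2 u - w2 v| ≤ ENNReal.ofReal |u - v| := by
    intro u _ v _
    refine ENNReal.ofReal_le_ofReal ?_
    calc |w2 u - w2 v| ≤ |(u - (1 - 2*ε)) - (v - (1 - 2*ε))| :=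
          abs_max_sub_max_le_abs _ _ _
      _ = |u - v| := by ring_nf
  have hw2meas : Measurable w2 :=
    (measurable_id.sub measurable_const).max measurable_const
  have hgmeas : Measurable (fun p : ℝ × ℝ => |p.1 - p.2| * (if 1 - ε ≤ p.1 then (1:ℝ) else 0)) :=
    ((measurable_fst.sub measurable_snd).abs).mul
      (Measurable.ite (measurableSet_le measurable_const measurable_fst)
        measurable_const measurable_const)
  have hgint : Integrable (fun p : ℝ × ℝ => |p.1 - p.2| * (if 1 - ε ≤ p.1 then (1:ℝ) else 0)) D := by
    refine integrable_of_meas_bdd hgmeas 1 ?_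
    filter_upwards [hD] with p hp
    have h := abs_fy_le_one hp.1 hp.2
    rw [abs_mul]
    split_ifs
    · simpa [abs_abs] using h
    · simp
  have hw2int : Integrable (fun p : ℝ × ℝ => (p.1 - p.2) * w2 p.1) D := by
    refine integrable_of_meas_bdd ((measurable_fst.sub measurable_snd).mul
      (hw2meas.comp measurable_fst)) 1 ?_
    filter_upwards [hD] with p hp
    have h1 := abs_fy_le_one hp.1 hp.2
    have h2 : |w2 p.1| ≤ 1 := abs_le.2 ⟨(hcand1 _ hp.1).1, (hcand1 _ hp.1).2⟩
    calc |(p.1 - p.2) * w2 p.1| = |p.1 - p.2| * |w2 p.1| := abs_mul _ _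
      _ ≤ 1 * 1 := mul_le_mul h1 h2 (abs_nonneg _) zero_le_one
      _ = 1 := one_mul 1
  have hpt : ∀ᵐ p ∂D, ε * (|p.1 - p.2| * (if 1 - ε ≤ p.1 then (1:ℝ) else 0)) ≤
      (p.1 - p.2) * w2 p.1 + 5 * ε ^ 2 := by
    filter_upwards [hD] with p hp
    obtain ⟨⟨hf0, hf1⟩, hy⟩ := hp
    simp only [hw2def]
    have habs0 : |p.1 - (0:ℝ)| = p.1 := by rw [sub_zero, abs_of_nonneg hf0]
    have habs1 : |p.1 - (1:ℝ)| = 1 - p.1 := by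
      rw [abs_of_nonpos (by linarith)]; ring
    rcases le_or_gt (p.1 - (1 - 2*ε)) 0 with hm | hm
    · rw [max_eq_right hm]
      rcases hy with hy | hy <;> rw [hy] <;> split_ifs with hf <;>
        simp only [habs0, habs1] <;> nlinarith
    · rw [max_eq_left hm.le]
      rcases hy with hy | hy <;> rw [hy] <;> split_ifs with hf <;>
        simp only [habs0, habs1] <;>
        nlinarith [mul_nonneg (sub_nonneg.2 hf1) hm.le, mul_nonneg hf0 hm.le,
          mul_le_mul (le_of_lt (show 1 - p.1 < 2*ε by linarith))
            (show p.1 - (1 - 2*ε) ≤ 2*ε by linarith) hm.le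
            (by linarith : (0:ℝ) ≤ 2*ε)]
  have hineq : ∫ p, ε * (|p.1 - p.2| * (if 1 - ε ≤ p.1 then (1:ℝ) else 0)) ∂D ≤
      ∫ p, ((p.1 - p.2) * w2 p.1 + 5 * ε ^ 2) ∂D :=
    integral_mono_ae (hgint.const_mul ε)
      (by exact hw2int.add (integrable_const (5*ε^2))) hpt
  rw [integral_const_mul, integral_add hw2int (integrable_const _), integral_const] at hineq
  simp only [measure_univ, probReal_univ, smul_eq_mul, one_mul] at hineq
  have hle : ∫ p, (p.1 - p.2) * w2 p.1 ∂D ≤ wCE D :=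
    le_wCEdE hD _ w2 hcand1 hcand2
  have hfin : ε * (wCE D / ε + 5 * ε) = wCE D + 5 * ε^2 := by field_simp
  have h2 : ε * ∫ p, |p.1 - p.2| * (if 1 - ε ≤ p.1 then (1:ℝ) else 0) ∂D ≤
      ε * (wCE D / ε + 5 * ε) := by rw [hfin]; linarith
  exact le_of_mul_le_mul_left h2 hε

lemma key_bound (hD : SupportedOn D) {c : ℝ} (hc : 0 < c) (d : ℝ → ℝ → ℝ≥0∞)
    (hd5 : ∀ ε : ℝ, 0 < ε → ∀ u ∈ Icc ε (1 - ε), ∀ v ∈ Icc ε (1 - ε),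
      d u v ≤ ENNReal.ofReal (|u - v| * ε ^ (-c)))
    {ε : ℝ} (hε : 0 < ε) (hε2 : ε ≤ 1/2)
    (w : ℝ → ℝ) (hw1 : ∀ u ∈ Icc (0:ℝ) 1, w u ∈ Icc (-1:ℝ) 1)
    (hw2 : ∀ u ∈ Icc (0:ℝ) 1, ∀ v ∈ Icc (0:ℝ) 1, ENNReal.ofReal |w u - w v| ≤ d u v) :
    ∫ p, (p.1 - p.2) * w p.1 ∂D ≤
      ε ^ (-c) * wCE D + 4 * (wCE D / ε + 5 * ε) := by
  have hK : 0 ≤ wCE D := wCEdE_nonneg hD _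
  have hE : (0:ℝ) < ε ^ (-c) := Real.rpow_pos_of_pos hε _
  have hEc : (0:ℝ) < ε ^ c := Real.rpow_pos_of_pos hε _
  have hEc1 : ε ^ (-c) * ε ^ c = 1 := by
    rw [← Real.rpow_add hε]; simp
  have hεhalf : ε ≤ 1 - ε := by linarith
  by_cases hint : Integrable (fun p : ℝ × ℝ => (p.1 - p.2) * w p.1) D
  swap
  · rw [integral_undef hint]
    have h1 : 0 ≤ ε ^ (-c) * wCE D := mul_nonneg hE.le hK
    have h2 : 0 ≤ wCE D / ε := div_nonneg hK hε.le
    nlinarith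
  -- the clamped, rescaled candidate
  set cl : ℝ → ℝ := fun u => max ε (min u (1-ε)) with hcldef
  set v : ℝ → ℝ := fun u => ε ^ c * w (cl u) with hvdef
  have hclmem : ∀ u : ℝ, cl u ∈ Icc ε (1-ε) := fun u =>
    ⟨le_max_left _ _, max_le hεhalf (min_le_right _ _)⟩
  have hcl01 : ∀ u : ℝ, cl u ∈ Icc (0:ℝ) 1 :=
    fun u => ⟨le_trans hε.le (hclmem u).1, le_trans (hclmem u).2 (by linarith)⟩
  have hv1 : ∀ u ∈ Icc (0:ℝ) 1, v u ∈ Icc (-1:ℝ) 1 := by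
    intro u _
    have hb : |w (cl u)| ≤ 1 :=
      abs_le.2 ⟨(hw1 _ (hcl01 u)).1, (hw1 _ (hcl01 u)).2⟩
    have hc1 : ε ^ c ≤ 1 := Real.rpow_le_one hε.le (by linarith) hc.le
    have : |v u| ≤ 1 := by
      simp only [hvdef, abs_mul, abs_of_pos hEc]
      calc ε ^ c * |w (cl u)| ≤ 1 * 1 := mul_le_mul hc1 hb (abs_nonneg _) zero_le_one
        _ = 1 := one_mul 1
    exact ⟨neg_le_of_abs_le this, le_of_abs_le this⟩
  have hv2 : ∀ u ∈ Icc (0:ℝ) 1, ∀ u' ∈ Icc (0:ℝ) 1,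
      ENNReal.ofReal |v u - v u'| ≤ ENNReal.ofReal |u - u'| := by
    intro u _ u' _
    refine ENNReal.ofReal_le_ofReal ?_
    have hw' : |w (cl u) - w (cl u')| ≤ |cl u - cl u'| * ε ^ (-c) := by
      have h1 : ENNReal.ofReal |w (cl u) - w (cl u')| ≤
          ENNReal.ofReal (|cl u - cl u'| * ε ^ (-c)) :=
        le_trans (hw2 _ (hcl01 u) _ (hcl01 u'))
          (hd5 ε hε _ (hclmem u) _ (hclmem u'))
      exact (ENNReal.ofReal_le_ofReal_iff
        (mul_nonneg (abs_nonneg _) hE.le)).1 h1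
    have hclLip : |cl u - cl u'| ≤ |u - u'| := by
      simp only [hcldef]
      calc |max ε (min u (1-ε)) - max ε (min u' (1-ε))|
          = |max (min u (1-ε)) ε - max (min u' (1-ε)) ε| := by
            rw [max_comm ε (min u (1-ε)), max_comm ε (min u' (1-ε))]
        _ ≤ |min u (1-ε) - min u' (1-ε)| := abs_max_sub_max_le_abs _ _ _
        _ ≤ max |u - u'| |(1-ε) - (1-ε)| := abs_min_sub_min_le_max _ _ _ _
        _ = |u - u'| := by simp
    have : |v u - v u'| = ε ^ c * |w (cl u) - w (cl u')| := by
      simp only [hvdef]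
      rw [← mul_sub, abs_mul, abs_of_pos hEc]
    rw [this]
    calc ε ^ c * |w (cl u) - w (cl u')| ≤ ε ^ c * (|cl u - cl u'| * ε ^ (-c)) :=
          mul_le_mul_of_nonneg_left hw' hEc.le
      _ = |cl u - cl u'| * (ε ^ (-c) * ε ^ c) := by ring
      _ = |cl u - cl u'| := by rw [hEc1, mul_one]
      _ ≤ |u - u'| := hclLip
  -- decomposition into middle / low / high parts
  set g1 : ℝ × ℝ → ℝ := fun p => (p.1 - p.2) * w p.1 *
    (if ε ≤ p.1 ∧ p.1 ≤ 1-ε then (1:ℝ) else 0) with hg1def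
  set g2 : ℝ × ℝ → ℝ := fun p => w ε * ((p.1 - p.2) *
    (if p.1 < ε then (1:ℝ) else 0)) with hg2def
  set g3 : ℝ × ℝ → ℝ := fun p => w (1-ε) * ((p.1 - p.2) *
    (if 1-ε < p.1 then (1:ℝ) else 0)) with hg3def
  set hL : ℝ × ℝ → ℝ := fun p => (p.1 - p.2) * w p.1 *
    (if p.1 < ε then (1:ℝ) else 0) with hhLdef
  set hH : ℝ × ℝ → ℝ := fun p => (p.1 - p.2) * w p.1 *
    (if 1-ε < p.1 then (1:ℝ) else 0) with hhHdef
  have hclval : ∀ p : ℝ × ℝ,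
      (p.1 < ε → cl p.1 = ε) ∧ (ε ≤ p.1 → p.1 ≤ 1-ε → cl p.1 = p.1) ∧
      (1-ε < p.1 → cl p.1 = 1-ε) := by
    intro p
    refine ⟨fun h => ?_, fun h h' => ?_, fun h => ?_⟩
    · simp only [hcldef]
      rw [min_eq_left (by linarith), max_eq_left h.le]
    · simp only [hcldef]
      rw [min_eq_left h', max_eq_right h]
    · simp only [hcldef]
      rw [min_eq_right h.le, max_eq_right hεhalf]
  have hid : ∀ p : ℝ × ℝ, (p.1 - p.2) * v p.1 = ε ^ c * (g1 p + g2 p + g3 p) := by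
    intro p
    simp only [hg1def, hg2def, hg3def, hvdef]
    rcases lt_or_ge p.1 ε with h | h
    · rw [(hclval p).1 h, if_pos h, if_neg (fun hh => absurd hh.1 (not_le.2 h)),
        if_neg (not_lt.2 (by linarith))]
      ring
    · rcases le_or_gt p.1 (1-ε) with h2 | h2
      · rw [(hclval p).2.1 h h2, if_pos ⟨h, h2⟩, if_neg (not_lt.2 h),
          if_neg (not_lt.2 h2)]
        ring
      · rw [(hclval p).2.2 h2, if_pos h2, if_neg (fun hh => absurd hh.2 (not_le.2 h2)),
          if_neg (not_lt.2 (by linarith))]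
        ring
  have hpart : ∀ p : ℝ × ℝ, (p.1 - p.2) * w p.1 = g1 p + hL p + hH p := by
    intro p
    simp only [hg1def, hhLdef, hhHdef]
    rcases lt_or_ge p.1 ε with h | h
    · rw [if_pos h, if_neg (fun hh => absurd hh.1 (not_le.2 h)),
        if_neg (not_lt.2 (by linarith))]
      ring
    · rcases le_or_gt p.1 (1-ε) with h2 | h2
      · rw [if_pos ⟨h, h2⟩, if_neg (not_lt.2 h), if_neg (not_lt.2 h2)]
        ring
      · rw [if_pos h2, if_neg (fun hh => absurd hh.2 (not_le.2 h2)),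
          if_neg (not_lt.2 (by linarith))]
        ring
  -- integrability of the pieces
  have hmLset : MeasurableSet {p : ℝ × ℝ | ε ≤ p.1 ∧ p.1 ≤ 1-ε} :=
    (measurableSet_le measurable_const measurable_fst).inter
      (measurableSet_le measurable_fst measurable_const)
  have hg1int : Integrable g1 D := by
    have : g1 = Set.indicator {p : ℝ × ℝ | ε ≤ p.1 ∧ p.1 ≤ 1-ε}
        (fun p => (p.1 - p.2) * w p.1) := by
      funext p
      simp only [hg1def, Set.indicator_apply, Set.mem_setOf_eq]
      split_ifs <;> ring
    rw [this]
    exact hint.indicator hmLset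
  have hLset : MeasurableSet {p : ℝ × ℝ | p.1 < ε} :=
    measurableSet_lt measurable_fst measurable_const
  have hHset : MeasurableSet {p : ℝ × ℝ | 1-ε < p.1} :=
    measurableSet_lt measurable_const measurable_fst
  have hhLint : Integrable hL D := by
    have : hL = Set.indicator {p : ℝ × ℝ | p.1 < ε}
        (fun p => (p.1 - p.2) * w p.1) := by
      funext p
      simp only [hhLdef, Set.indicator_apply, Set.mem_setOf_eq]
      split_ifs <;> ring
    rw [this]
    exact hint.indicator hLset
  have hhHint : Integrable hH D := by
    have : hH = Set.indicator {p : ℝ × ℝ | 1-ε < p.1}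
        (fun p => (p.1 - p.2) * w p.1) := by
      funext p
      simp only [hhHdef, Set.indicator_apply, Set.mem_setOf_eq]
      split_ifs <;> ring
    rw [this]
    exact hint.indicator hHset
  have hwε : |w ε| ≤ 1 := abs_le.2 ⟨(hw1 ε ⟨hε.le, by linarith⟩).1, (hw1 ε ⟨hε.le, by linarith⟩).2⟩
  have hwε' : |w (1-ε)| ≤ 1 :=
    abs_le.2 ⟨(hw1 (1-ε) ⟨by linarith, by linarith⟩).1, (hw1 (1-ε) ⟨by linarith, by linarith⟩).2⟩
  have hg2int : Integrable g2 D := by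
    refine integrable_of_meas_bdd (measurable_const.mul
      ((measurable_fst.sub measurable_snd).mul
        (Measurable.ite (measurableSet_lt measurable_fst measurable_const)
          measurable_const measurable_const))) 1 ?_
    filter_upwards [hD] with p hp
    have h1 := abs_fy_le_one hp.1 hp.2
    simp only [hg2def, abs_mul]
    split_ifs
    · simp only [abs_one, mul_one]
      calc |w ε| * |p.1 - p.2| ≤ 1 * 1 := mul_le_mul hwε h1 (abs_nonneg _) zero_le_one
        _ = 1 := one_mul 1
    · simp
  have hg3int : Integrable g3 D := by
    refine integrable_of_meas_bdd (measurable_const.mul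
      ((measurable_fst.sub measurable_snd).mul
        (Measurable.ite (measurableSet_lt measurable_const measurable_fst)
          measurable_const measurable_const))) 1 ?_
    filter_upwards [hD] with p hp
    have h1 := abs_fy_le_one hp.1 hp.2
    simp only [hg3def, abs_mul]
    split_ifs
    · simp only [abs_one, mul_one]
      calc |w (1-ε)| * |p.1 - p.2| ≤ 1 * 1 := mul_le_mul hwε' h1 (abs_nonneg _) zero_le_one
        _ = 1 := one_mul 1
    · simp
  -- the middle part compares to wCE via the candidate v
  have hvint : Integrable (fun p : ℝ × ℝ => (p.1 - p.2) * v p.1) D := by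
    have : (fun p : ℝ × ℝ => (p.1 - p.2) * v p.1) =
        fun p => ε ^ c * (g1 p + g2 p + g3 p) := funext hid
    rw [this]
    exact (((hg1int.add hg2int).add hg3int).const_mul _)
  have hvle : ∫ p, (p.1 - p.2) * v p.1 ∂D ≤ wCE D := le_wCEdE hD _ v hv1 hv2
  have hsum : ∫ p, (p.1 - p.2) * v p.1 ∂D =
      ε ^ c * (∫ p, g1 p ∂D + ∫ p, g2 p ∂D + ∫ p, g3 p ∂D) := by
    rw [show (fun p : ℝ × ℝ => (p.1 - p.2) * v p.1) =
        fun p => ε ^ c * (g1 p + g2 p + g3 p) from funext hid]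
    have hadd12 : Integrable (fun p : ℝ × ℝ => g1 p + g2 p) D := by
      exact hg1int.add hg2int
    rw [integral_const_mul, integral_add hadd12 hg3int, integral_add hg1int hg2int]
  have hsplit : ∫ p, (p.1 - p.2) * w p.1 ∂D =
      ∫ p, g1 p ∂D + ∫ p, hL p ∂D + ∫ p, hH p ∂D := by
    rw [show (fun p : ℝ × ℝ => (p.1 - p.2) * w p.1) =
        fun p => g1 p + hL p + hH p from funext hpart]
    have hadd1L : Integrable (fun p : ℝ × ℝ => g1 p + hL p) D := by
      exact hg1int.add hhLint
    rw [integral_add hadd1L hhHint, integral_add hg1int hhLint]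
  -- tail bounds
  have htlint : Integrable (fun p : ℝ × ℝ => |p.1 - p.2| * (if p.1 ≤ ε then (1:ℝ) else 0)) D := by
    refine integrable_of_meas_bdd (((measurable_fst.sub measurable_snd).abs).mul
      (Measurable.ite (measurableSet_le measurable_fst measurable_const)
        measurable_const measurable_const)) 1 ?_
    filter_upwards [hD] with p hp
    have h := abs_fy_le_one hp.1 hp.2
    rw [abs_mul]
    split_ifs
    · simpa [abs_abs] using h
    · simp
  have hthint : Integrable (fun p : ℝ × ℝ => |p.1 - p.2| * (if 1-ε ≤ p.1 then (1:ℝ) else 0)) D := by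
    refine integrable_of_meas_bdd (((measurable_fst.sub measurable_snd).abs).mul
      (Measurable.ite (measurableSet_le measurable_const measurable_fst)
        measurable_const measurable_const)) 1 ?_
    filter_upwards [hD] with p hp
    have h := abs_fy_le_one hp.1 hp.2
    rw [abs_mul]
    split_ifs
    · simpa [abs_abs] using h
    · simp
  have hTL := tail_low hD hε hε2
  have hTH := tail_high hD hε hε2
  -- |∫ g2|, ∫ hL  ≤ low tail;  |∫ g3|, ∫ hH ≤ high tail
  have habs_g2 : |∫ p, g2 p ∂D| ≤ wCE D / ε + 5 * ε := by
    refine le_trans (by simpa [Real.norm_eq_abs] using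
      norm_integral_le_integral_norm (μ := D) g2) (le_trans ?_ hTL)
    refine integral_mono_ae hg2int.abs htlint ?_
    filter_upwards [] with p
    simp only [hg2def, abs_mul]
    split_ifs with h1 h2
    · simp only [abs_one, mul_one]
      calc |w ε| * |p.1 - p.2| ≤ 1 * |p.1 - p.2| :=
            mul_le_mul_of_nonneg_right hwε (abs_nonneg _)
        _ = |p.1 - p.2| := one_mul _
    · exact absurd (le_of_lt h1) h2
    · simp [abs_nonneg]
    · simp
  have habs_g3 : |∫ p, g3 p ∂D| ≤ wCE D / ε + 5 * ε := by
    refine le_trans (by simpa [Real.norm_eq_abs] using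
      norm_integral_le_integral_norm (μ := D) g3) (le_trans ?_ hTH)
    refine integral_mono_ae hg3int.abs hthint ?_
    filter_upwards [] with p
    simp only [hg3def, abs_mul]
    split_ifs with h1 h2
    · simp only [abs_one, mul_one]
      calc |w (1-ε)| * |p.1 - p.2| ≤ 1 * |p.1 - p.2| :=
            mul_le_mul_of_nonneg_right hwε' (abs_nonneg _)
        _ = |p.1 - p.2| := one_mul _
    · exact absurd (le_of_lt h1) h2
    · simp [abs_nonneg]
    · simp
  have hhL_le : ∫ p, hL p ∂D ≤ wCE D / ε + 5 * ε := by
    refine le_trans ?_ hTL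
    refine integral_mono_ae hhLint htlint ?_
    filter_upwards [hD] with p hp
    have h1 : |w p.1| ≤ 1 := abs_le.2 ⟨(hw1 _ hp.1).1, (hw1 _ hp.1).2⟩
    simp only [hhLdef]
    split_ifs with h2 h3
    · calc (p.1 - p.2) * w p.1 * 1 ≤ |(p.1 - p.2) * w p.1 * 1| := le_abs_self _
        _ = |p.1 - p.2| * |w p.1| := by rw [mul_one, abs_mul]
        _ ≤ |p.1 - p.2| * 1 := mul_le_mul_of_nonneg_left h1 (abs_nonneg _)
        _ = |p.1 - p.2| * 1 := rfl
    · exact absurd (le_of_lt h2) h3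
    · simp [abs_nonneg]
    · simp
  have hhH_le : ∫ p, hH p ∂D ≤ wCE D / ε + 5 * ε := by
    refine le_trans ?_ hTH
    refine integral_mono_ae hhHint hthint ?_
    filter_upwards [hD] with p hp
    have h1 : |w p.1| ≤ 1 := abs_le.2 ⟨(hw1 _ hp.1).1, (hw1 _ hp.1).2⟩
    simp only [hhHdef]
    split_ifs with h2 h3
    · calc (p.1 - p.2) * w p.1 * 1 ≤ |(p.1 - p.2) * w p.1 * 1| := le_abs_self _
        _ = |p.1 - p.2| * |w p.1| := by rw [mul_one, abs_mul]
        _ ≤ |p.1 - p.2| * 1 := mul_le_mul_of_nonneg_left h1 (abs_nonneg _)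
        _ = |p.1 - p.2| * 1 := rfl
    · exact absurd (le_of_lt h2) h3
    · simp [abs_nonneg]
    · simp
  -- assemble
  have hg1_le : ∫ p, g1 p ∂D ≤ ε ^ (-c) * wCE D +
      (wCE D / ε + 5 * ε) + (wCE D / ε + 5 * ε) := by
    have h5 : ε ^ (-c) * ∫ p, (p.1 - p.2) * v p.1 ∂D =
        ∫ p, g1 p ∂D + ∫ p, g2 p ∂D + ∫ p, g3 p ∂D := by
      rw [hsum, ← mul_assoc, hEc1, one_mul]
    have h6 : ε ^ (-c) * ∫ p, (p.1 - p.2) * v p.1 ∂D ≤ ε ^ (-c) * wCE D :=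
      mul_le_mul_of_nonneg_left hvle hE.le
    have h7 := neg_abs_le (∫ p, g2 p ∂D)
    have h8 := neg_abs_le (∫ p, g3 p ∂D)
    linarith
  rw [hsplit]
  linarith

end Tails


/-- If the metric `d` on `[0,1]` (possibly taking value `∞`) satisfies
`d(u,v) ≤ |u-v|·ε^{-c}` for all `u,v ∈ [ε, 1-ε]`, then `wCE_d(D)^q ≤ C·wCE(D)` with
`q = max(c+1, 2)` and a constant `C` depending only on `c`. -/
theorem wCEd_pow_le_wCE (c : ℝ) (hc : 0 < c) :
    ∃ C : ℝ, 0 < C ∧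
      ∀ d : ℝ → ℝ → ℝ≥0∞,
        (∀ u ∈ Icc (0 : ℝ) 1, d u u = 0) →
        (∀ u ∈ Icc (0 : ℝ) 1, ∀ v ∈ Icc (0 : ℝ) 1, d u v = 0 → u = v) →
        (∀ u ∈ Icc (0 : ℝ) 1, ∀ v ∈ Icc (0 : ℝ) 1, d u v = d v u) →
        (∀ u ∈ Icc (0 : ℝ) 1, ∀ v ∈ Icc (0 : ℝ) 1, ∀ z ∈ Icc (0 : ℝ) 1,
          d u z ≤ d u v + d v z) →
        (∀ ε : ℝ, 0 < ε → ∀ u ∈ Icc ε (1 - ε), ∀ v ∈ Icc ε (1 - ε),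
          d u v ≤ ENNReal.ofReal (|u - v| * ε ^ (-c))) →
        ∀ (D : Measure (ℝ × ℝ)) [IsProbabilityMeasure D], SupportedOn D →
          wCEdE d D ^ max (c + 1) 2 ≤ C * wCE D := by
  set q : ℝ := max (c + 1) 2 with hqdef
  have hq2 : (2:ℝ) ≤ q := le_max_right _ _
  have hqc : c + 1 ≤ q := le_max_left _ _
  have hq0 : (0:ℝ) < q := lt_of_lt_of_le two_pos hq2
  have hB0 : (0:ℝ) < (2:ℝ) ^ c + 18 := by
    have := Real.rpow_pos_of_pos (by norm_num : (0:ℝ) < 2) c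
    linarith
  refine ⟨((2:ℝ) ^ c + 18) ^ q, Real.rpow_pos_of_pos hB0 q, ?_⟩
  intro d _ _ _ _ hd5 D _ hD
  have hK0 : 0 ≤ wCE D := wCEdE_nonneg hD _
  have hK1 : wCE D ≤ 1 := wCE_le_one hD
  have hL0 : 0 ≤ wCEdE d D := wCEdE_nonneg hD _
  have hbound : ∀ ε : ℝ, 0 < ε → ε ≤ 1/2 →
      wCEdE d D ≤ ε ^ (-c) * wCE D + 4 * (wCE D / ε + 5 * ε) :=
    fun ε hε hε2 => wCEdE_le d
      (fun w hw1 hw2 => key_bound hD hc d hd5 hε hε2 w hw1 hw2)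
  rcases eq_or_lt_of_le hK0 with hKz | hKpos
  · -- wCE D = 0
    have hL20 : ∀ ε : ℝ, 0 < ε → ε ≤ 1/2 → wCEdE d D ≤ 20 * ε := by
      intro ε hε hε2
      have h := hbound ε hε hε2
      rw [← hKz] at h
      have : ε ^ (-c) * 0 + 4 * (0 / ε + 5 * ε) = 20 * ε := by ring
      linarith [h, this.le]
    have hLz : wCEdE d D = 0 := by
      refine le_antisymm ?_ hL0
      by_contra h
      push_neg at h
      have hε : (0:ℝ) < min (1/2) (wCEdE d D / 40) :=
        lt_min (by norm_num) (by positivity)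
      have h1 := hL20 _ hε (min_le_left _ _)
      have h2 : min (1/2) (wCEdE d D / 40) ≤ wCEdE d D / 40 := min_le_right _ _
      linarith
    rw [hLz, ← hKz, Real.zero_rpow hq0.ne']
    simp
  · -- wCE D > 0
    set K := wCE D with hKdef
    set ε : ℝ := K ^ (1/q) / 2 with hεdef
    have hKq : (0:ℝ) < K ^ (1/q) := Real.rpow_pos_of_pos hKpos _
    have hKq1 : K ^ (1/q) ≤ 1 := Real.rpow_le_one hK0 hK1 (by positivity)
    have hε : 0 < ε := by positivity
    have hε2 : ε ≤ 1/2 := by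
      rw [hεdef]; linarith
    have h := hbound ε hε hε2
    -- rewrite the three terms
    have ht1 : ε ^ (-c) * K ≤ (2:ℝ) ^ c * K ^ (1/q) := by
      have he : ε ^ (-c) = (2:ℝ) ^ c * (K ^ (1/q)) ^ (-c) := by
        rw [hεdef, Real.div_rpow hKq.le (by norm_num : (0:ℝ) ≤ 2),
          Real.rpow_neg hKq.le, Real.rpow_neg (by norm_num : (0:ℝ) ≤ 2)]
        field_simp
      have hexp : 1/q ≤ 1 - c/q := by
        rw [le_sub_iff_add_le, ← add_div, div_le_one hq0]; linarith
      have hcomb : (K ^ (1/q)) ^ (-c) * K = K ^ (1 - c/q) := by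
        rw [← Real.rpow_mul hK0]
        nth_rewrite 2 [← Real.rpow_one K]
        rw [← Real.rpow_add hKpos]
        congr 1
        ring
      rw [he, mul_assoc, hcomb]
      exact mul_le_mul_of_nonneg_left
        (Real.rpow_le_rpow_of_exponent_ge hKpos hK1 hexp)
        (Real.rpow_pos_of_pos (by norm_num : (0:ℝ) < 2) c).le
    have hKe : K / ε = 2 * K ^ (1 - 1/q) := by
      rw [hεdef, Real.rpow_sub hKpos, Real.rpow_one]
      field_simp
    have hexp2 : 1/q ≤ 1 - 1/q := by
      rw [le_sub_iff_add_le, ← add_div, div_le_one hq0]; linarith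
    have he2 : K ^ (1 - 1/q) ≤ K ^ (1/q) :=
      Real.rpow_le_rpow_of_exponent_ge hKpos hK1 hexp2
    rw [hKe] at h
    have hfinal : wCEdE d D ≤ ((2:ℝ) ^ c + 18) * K ^ (1/q) := by
      have hεeq : ε = K ^ (1/q) / 2 := hεdef
      nlinarith [ht1, he2, h, hεeq]
    have h1 : wCEdE d D ^ q ≤ (((2:ℝ) ^ c + 18) * K ^ (1/q)) ^ q :=
      Real.rpow_le_rpow hL0 hfinal hq0.le
    have h2 : (((2:ℝ) ^ c + 18) * K ^ (1/q)) ^ q = ((2:ℝ) ^ c + 18) ^ q * K := by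
      rw [Real.mul_rpow hB0.le hKq.le, ← Real.rpow_mul hK0,
        one_div_mul_cancel hq0.ne', Real.rpow_one]
    rw [h2] at h1
    exact h1
end
end
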